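/- arXiv:2005.10319 — 6 statements merged into one kernel-verified Lean document; each statement's English description precedes it below -/
import Mathlib

section
/- Let T be a tree, k ≥ 2 an integer, v ∈ V(T), and S a k-element subset of V(T) containing v. Let T_v be the (unique) S-Steiner tree in T, and let P be a path in T with at least one edge such that V(P) ∩ V(T_v) = {x}, where x is an endpoint of P. If either (1) x ∈ S and x ≠ v, or (2) x ∉ S and T_v has an internal vertex (a vertex of degree ≥ 2 in T_v) that belongs to S and differs from v, then there exists a k-element set S′ ≠ S with v ∈ S′ ⊆ V(T) such that the number of edges of the S′-Steiner tree is strictly larger than the number of edges of T_v. -/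
open SimpleGraph

/-- The Steiner distance of a set `S` of vertices of `G`: the minimum number of edges of a
connected subgraph of `G` whose vertex set contains `S`. -/
noncomputable def steinerDist {V : Type} [Fintype V] (G : SimpleGraph V) (S : Set V) : ℕ :=
  sInf {n | ∃ H : G.Subgraph, H.Connected ∧ S ⊆ H.verts ∧ H.edgeSet.ncard = n}

/-- The Steiner `k`-eccentricity of a vertex `v` of `G`. -/
noncomputable def steinerEcc {V : Type} [Fintype V] (G : SimpleGraph V) (k : ℕ) (v : V) : ℕ :=
  sSup {d | ∃ S : Finset V, v ∈ S ∧ S.card = k ∧ steinerDist G ↑S = d}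

/-- A leaf (pendent vertex) of a graph: a vertex of degree 1. -/
def IsLeaf {V : Type} (G : SimpleGraph V) (u : V) : Prop :=
  (G.neighborSet u).ncard = 1

/-- The number of leaves of a graph. -/
noncomputable def numLeaves {V : Type} [Fintype V] (G : SimpleGraph V) : ℕ :=
  {u : V | IsLeaf G u}.ncard

set_option linter.unusedSectionVars false

namespace SteinerAux

variable {V : Type} [Fintype V] [DecidableEq V] {G : SimpleGraph V}

lemma coe_acyclic (hG : G.IsAcyclic) (H : G.Subgraph) : H.coe.IsAcyclic := by
  intro v c hc
  exact hG (c.map H.hom) (hc.map Subgraph.hom_injective)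

lemma subgraph_card (hG : G.IsAcyclic) {H : G.Subgraph} (hH : H.Connected) :
    H.edgeSet.ncard + 1 = H.verts.ncard := by
  classical
  have htree : H.coe.IsTree := ⟨hH.coe, coe_acyclic hG H⟩
  have : Fintype H.verts := Fintype.ofFinite _
  have : Fintype H.coe.edgeSet := Fintype.ofFinite _
  have hcard := htree.card_edgeFinset
  have h1 : H.verts.ncard = Fintype.card H.verts := by
    rw [Set.ncard_eq_toFinset_card', Set.toFinset_card]
  rw [edgeFinset_card] at hcard
  have h2 : H.edgeSet.ncard = Fintype.card H.coe.edgeSet := by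
    rw [← Subgraph.image_coe_edgeSet_coe,
      Set.ncard_image_of_injective _ (Sym2.map.injective Subtype.val_injective),
      Set.ncard_eq_toFinset_card', Set.toFinset_card]
  omega

lemma support_subset_of_connected (hG : G.IsAcyclic) {H : G.Subgraph} (hH : H.Connected)
    {a b : V} (ha : a ∈ H.verts) (hb : b ∈ H.verts) {p : G.Walk a b} (hp : p.IsPath) :
    ∀ y ∈ p.support, y ∈ H.verts := by
  obtain ⟨-, hwalk⟩ := (Subgraph.connected_iff_forall_exists_walk_subgraph H).1 hH
  obtain ⟨w, hw⟩ := hwalk ha hb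
  have hsup : ∀ y ∈ w.support, y ∈ H.verts := by
    intro y hy
    have : y ∈ w.toSubgraph.verts := (w.mem_verts_toSubgraph).2 hy
    exact hw.1 this
  have huniq : p = w.bypass :=
    congrArg Subtype.val (hG.path_unique ⟨p, hp⟩ ⟨w.bypass, w.bypass_isPath⟩)
  intro y hy
  have : y ∈ w.bypass.support := huniq ▸ hy
  exact hsup y (w.support_bypass_subset this)

lemma sup_walks (v : V) (g : V → G.Subgraph)
    (hconn : ∀ a, (g a).Connected) (hv : ∀ a, v ∈ (g a).verts)
    {A : Finset V} (hA : A.Nonempty) : (A.sup g).Connected ∧ v ∈ (A.sup g).verts := by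
  induction hA using Finset.Nonempty.cons_induction with
  | singleton a => simpa [Finset.sup_singleton] using ⟨hconn a, hv a⟩
  | cons a s ha hs ih =>
      rw [Finset.sup_cons]
      refine ⟨Subgraph.connected_sup (hconn a).preconnected ih.1.preconnected ⟨v, ?_⟩, Or.inl (hv a)⟩
      rw [Subgraph.verts_inf]
      exact ⟨hv a, ih.2⟩

lemma mem_sup_verts (g : V → G.Subgraph) (A : Finset V) (u : V) :
    u ∈ (A.sup g).verts ↔ ∃ a ∈ A, u ∈ (g a).verts := by
  induction A using Finset.cons_induction with
  | empty => simp [Finset.sup_empty, Subgraph.verts_bot]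
  | cons a s ha ih =>
      simp [Finset.sup_cons, Subgraph.verts_sup, ih, Set.mem_union]

lemma not_mem_dropUntil_support {t v w : V} {p : G.Walk t v} (hp : p.IsPath)
    (hw : w ∈ p.support) (hwt : w ≠ t) : t ∉ (p.dropUntil w hw).support := by
  intro ht
  have hnd := hp.support_nodup
  rw [← p.take_spec hw, Walk.support_append] at hnd
  have hdisj := List.disjoint_of_nodup_append hnd
  have h1 : t ∈ (p.takeUntil w hw).support := Walk.start_mem_support _
  have h2 : t ∈ (p.dropUntil w hw).support.tail := by
    have := (p.dropUntil w hw).support_eq_cons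
    rw [this] at ht
    rcases List.mem_cons.1 ht with ht | ht
    · exact absurd ht.symm hwt
    · exact ht
  exact hdisj h1 h2

end SteinerAux

/-- Lemma 2.3. -/
theorem steiner_distance_growing {V : Type} [Fintype V] [DecidableEq V]
    (G : SimpleGraph V) (hT : G.IsTree) (k : ℕ) (hk : 2 ≤ k)
    (v : V) (S : Finset V) (hvS : v ∈ S) (hcard : S.card = k)
    (Tv : G.Subgraph) (hTvc : Tv.Connected) (hTvs : ↑S ⊆ Tv.verts)
    (hTve : Tv.edgeSet.ncard = steinerDist G ↑S)
    (x b : V) (P : G.Walk x b) (hP : P.IsPath) (hPlen : 1 ≤ P.length)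
    (hmeet : {y | y ∈ P.support} ∩ Tv.verts = {x})
    (hcase : (x ∈ S ∧ x ≠ v) ∨
      (x ∉ S ∧ ∃ t ∈ S, t ≠ v ∧ 2 ≤ (Tv.neighborSet t).ncard)) :
    ∃ S' : Finset V, S' ≠ S ∧ v ∈ S' ∧ S'.card = k ∧
      steinerDist G ↑S < steinerDist G ↑S' := by
  classical
  choose f hf hf' using hT.existsUnique_path
  set g : V → G.Subgraph := fun a => (f v a).toSubgraph with hg
  -- basic facts about x and a neighbor x₁ of x on P
  have hxTv : x ∈ Tv.verts := by
    have hx : x ∈ ({y | y ∈ P.support} : Set V) ∩ Tv.verts := by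
      rw [hmeet]; rfl
    exact hx.2
  obtain ⟨x₁, hadj, hx1P⟩ : ∃ y, G.Adj x y ∧ y ∈ P.support := by
    cases P with
    | nil => simp at hPlen
    | cons h q => exact ⟨_, h, by simp⟩
  have hx1Tv : x₁ ∉ Tv.verts := by
    intro h
    have hx : x₁ ∈ ({y | y ∈ P.support} : Set V) ∩ Tv.verts := ⟨hx1P, h⟩
    rw [hmeet] at hx
    exact hadj.ne' hx
  have hx1S : x₁ ∉ S := fun h => hx1Tv (hTvs (Finset.mem_coe.2 h))
  -- convexity into Tv
  have convTv : ∀ a b : V, a ∈ Tv.verts → b ∈ Tv.verts → ∀ y ∈ (f a b).support, y ∈ Tv.verts :=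
    fun a b ha hb => SteinerAux.support_subset_of_connected hT.IsAcyclic hTvc ha hb (hf a b)
  -- the star subgraph of paths from v to S
  have hSne : S.Nonempty := ⟨v, hvS⟩
  obtain ⟨hHUc, -⟩ := SteinerAux.sup_walks v g (fun a => Walk.toSubgraph_connected _)
      (fun a => (f v a).start_mem_verts_toSubgraph) hSne
  have hHUverts : ∀ u, u ∈ (S.sup g).verts ↔ ∃ a ∈ S, u ∈ (f v a).support := by
    intro u; rw [SteinerAux.mem_sup_verts]
    exact exists_congr fun a => and_congr_right fun _ => Walk.mem_verts_toSubgraph _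
  have hHUsub : (S.sup g).verts ⊆ Tv.verts := by
    intro u hu
    obtain ⟨a, haS, hu⟩ := (hHUverts u).1 hu
    exact convTv v a (hTvs (Finset.mem_coe.2 hvS)) (hTvs (Finset.mem_coe.2 haS)) u hu
  have hSsubHU : (S : Set V) ⊆ (S.sup g).verts := by
    intro a haS
    exact (hHUverts a).2 ⟨a, Finset.mem_coe.1 haS, (f v a).end_mem_support⟩
  -- cardinalities
  have hTvcard := SteinerAux.subgraph_card hT.IsAcyclic hTvc
  have hHUcard := SteinerAux.subgraph_card hT.IsAcyclic hHUc
  have hled : steinerDist G ↑S ≤ (S.sup g).edgeSet.ncard :=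
    Nat.sInf_le ⟨S.sup g, hHUc, hSsubHU, rfl⟩
  have hHUeq : (S.sup g).verts = Tv.verts := by
    refine Set.eq_of_subset_of_ncard_le hHUsub ?_ (Set.toFinite _)
    omega
  have hcover : ∀ u ∈ Tv.verts, ∃ a ∈ S, u ∈ (f v a).support := by
    intro u hu; exact (hHUverts u).1 (hHUeq ▸ hu)
  -- the key lower bound
  have key : ∀ H : G.Subgraph, H.Connected → (S : Set V) ⊆ H.verts → x₁ ∈ H.verts →
      steinerDist G ↑S < H.edgeSet.ncard := by
    intro H hHc hHS hHx1
    have hTvH : Tv.verts ⊆ H.verts := by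
      intro u hu
      obtain ⟨a, haS, hu⟩ := hcover u hu
      exact SteinerAux.support_subset_of_connected hT.IsAcyclic hHc
        (hHS (Finset.mem_coe.2 hvS)) (hHS (Finset.mem_coe.2 haS)) (hf v a) u hu
    have hne : Tv.verts ≠ H.verts := fun h => hx1Tv (h ▸ hHx1)
    have hlt := Set.ncard_lt_ncard (hTvH.ssubset_of_ne hne) (Set.toFinite _)
    have hHcard := SteinerAux.subgraph_card hT.IsAcyclic hHc
    omega
  -- the common final step
  have hfinal : ∀ (S' : Finset V), x₁ ∈ S' →
      ((S' : Set V) ⊆ Tv.verts ∪ {y | y ∈ P.support}) →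
      (∀ H : G.Subgraph, H.Connected → (S' : Set V) ⊆ H.verts → (S : Set V) ⊆ H.verts) →
      steinerDist G ↑S < steinerDist G ↑S' := by
    intro S' hx1S' hS'sub hSofS'
    have hH0c : (Tv ⊔ P.toSubgraph).Connected := by
      apply Subgraph.connected_sup hTvc.preconnected P.toSubgraph_connected.preconnected
      exact ⟨x, by rw [Subgraph.verts_inf]; exact ⟨hxTv, P.start_mem_verts_toSubgraph⟩⟩
    have hH0s : (S' : Set V) ⊆ (Tv ⊔ P.toSubgraph).verts := by
      intro y hy
      rw [Subgraph.verts_sup]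
      rcases hS'sub hy with h | h
      · exact Or.inl h
      · exact Or.inr ((Walk.mem_verts_toSubgraph P).2 h)
    have hnonempty : {n | ∃ H : G.Subgraph, H.Connected ∧ (S' : Set V) ⊆ H.verts ∧
        H.edgeSet.ncard = n}.Nonempty := ⟨_, Tv ⊔ P.toSubgraph, hH0c, hH0s, rfl⟩
    obtain ⟨H, hHc, hHS', hHe⟩ := Nat.sInf_mem hnonempty
    have hlt := key H hHc (hSofS' H hHc hHS') (hHS' (Finset.mem_coe.2 hx1S'))
    have h2 : steinerDist G (↑S' : Set V) = H.edgeSet.ncard := hHe.symm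
    rw [h2]
    exact hlt
  rcases hcase with ⟨hxS, hxv⟩ | ⟨hxS, t, htS, htv, hdeg⟩
  · -- Case 1
    refine ⟨insert x₁ (S.erase x), ?_, ?_, ?_, ?_⟩
    · intro h
      exact hx1S (h ▸ Finset.mem_insert_self x₁ (S.erase x))
    · exact Finset.mem_insert_of_mem (Finset.mem_erase.2 ⟨Ne.symm hxv, hvS⟩)
    · rw [Finset.card_insert_of_notMem (fun h => hx1S (Finset.mem_of_mem_erase h)),
        Finset.card_erase_of_mem hxS, hcard]
      omega
    · apply hfinal
      · exact Finset.mem_insert_self _ _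
      · intro y hy
        rcases Finset.mem_insert.1 (Finset.mem_coe.1 hy) with h | h
        · exact Or.inr (h ▸ hx1P)
        · exact Or.inl (hTvs (Finset.mem_coe.2 (Finset.mem_of_mem_erase h)))
      · intro H hHc hHS'
        have hvH : v ∈ H.verts :=
          hHS' (Finset.mem_coe.2 (Finset.mem_insert_of_mem (Finset.mem_erase.2 ⟨Ne.symm hxv, hvS⟩)))
        have hx1H : x₁ ∈ H.verts := hHS' (Finset.mem_coe.2 (Finset.mem_insert_self _ _))
        -- x lies on the path from v to x₁
        have hx1notsup : x₁ ∉ (f x v).support := fun h =>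
          hx1Tv (convTv x v hxTv (hTvs (Finset.mem_coe.2 hvS)) x₁ h)
        have hr : ((Walk.cons hadj.symm (f x v)).reverse).IsPath :=
          ((hf x v).cons hx1notsup).reverse
        have hreq : (Walk.cons hadj.symm (f x v)).reverse = f v x₁ :=
          hf' v x₁ _ hr
        have hxmem : x ∈ (f v x₁).support := by
          rw [← hreq, Walk.support_reverse, List.mem_reverse, Walk.support_cons]
          exact List.mem_cons_of_mem _ (Walk.start_mem_support _)
        have hxH : x ∈ H.verts :=
          SteinerAux.support_subset_of_connected hT.IsAcyclic hHc hvH hx1H (hf v x₁) x hxmem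
        intro s hs
        by_cases hsx : s = x
        · exact hsx ▸ hxH
        · exact hHS' (Finset.mem_coe.2 (Finset.mem_insert_of_mem
            (Finset.mem_erase.2 ⟨hsx, Finset.mem_coe.1 hs⟩)))
  · -- Case 2
    -- a neighbor w of t in Tv which is not the second vertex of the path from t to v
    have hADJ : ∀ w, G.Adj t w → w ∈ (f t v).support → w = (f t v).getVert 1 := by
      intro w hw hwsup
      have hwt : w ≠ t := hw.ne'
      have hq : (Walk.cons hw ((f t v).dropUntil w hwsup)).IsPath :=
        ((hf t v).dropUntil hwsup).cons
          (SteinerAux.not_mem_dropUntil_support (hf t v) hwsup hwt)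
      have heq := hf' t v _ hq
      have h2 := congrArg (fun q : G.Walk t v => q.getVert 1) heq
      simp only [Walk.getVert_cons_succ, Walk.getVert_zero] at h2
      exact h2
    obtain ⟨n₁, hn₁, n₂, hn₂, hn12⟩ := (Set.one_lt_ncard (s := Tv.neighborSet t) (Set.toFinite _)).1 (by omega)
    obtain ⟨w, hwadjTv, hwne⟩ : ∃ w, Tv.Adj t w ∧ w ≠ (f t v).getVert 1 := by
      by_cases h : n₁ = (f t v).getVert 1
      · exact ⟨n₂, hn₂, fun hh => hn12 (h.trans hh.symm)⟩
      · exact ⟨n₁, hn₁, h⟩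
    have hwadj : G.Adj t w := hwadjTv.adj_sub
    have hwnotsup : w ∉ (f t v).support := fun h => hwne (hADJ w hwadj h)
    have hwTv : w ∈ Tv.verts := hwadjTv.snd_mem
    obtain ⟨a, haS, hwa⟩ := hcover w hwTv
    have hat : a ≠ t := by
      intro h
      subst h
      have : (f a v).reverse = f v a := hf' v a _ (hf a v).reverse
      rw [← this, Walk.support_reverse, List.mem_reverse] at hwa
      exact hwnotsup hwa
    -- t lies on the path from v to a
    have htva : t ∈ (f v a).support := by
      have hr : ((Walk.cons hwadj.symm (f t v)).reverse).IsPath :=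
        ((hf t v).cons hwnotsup).reverse
      have hreq : (Walk.cons hwadj.symm (f t v)).reverse = f v w := hf' v w _ hr
      have htmem : t ∈ (f v w).support := by
        rw [← hreq, Walk.support_reverse, List.mem_reverse, Walk.support_cons]
        exact List.mem_cons_of_mem _ (Walk.start_mem_support _)
      have htu : (f v a).takeUntil w hwa = f v w := hf' v w _ ((hf v a).takeUntil hwa)
      rw [← htu] at htmem
      exact Walk.support_takeUntil_subset _ hwa htmem
    refine ⟨insert x₁ (S.erase t), ?_, ?_, ?_, ?_⟩
    · intro h
      exact hx1S (h ▸ Finset.mem_insert_self x₁ (S.erase t))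
    · exact Finset.mem_insert_of_mem (Finset.mem_erase.2 ⟨Ne.symm htv, hvS⟩)
    · rw [Finset.card_insert_of_notMem (fun h => hx1S (Finset.mem_of_mem_erase h)),
        Finset.card_erase_of_mem htS, hcard]
      omega
    · apply hfinal
      · exact Finset.mem_insert_self _ _
      · intro y hy
        rcases Finset.mem_insert.1 (Finset.mem_coe.1 hy) with h | h
        · exact Or.inr (h ▸ hx1P)
        · exact Or.inl (hTvs (Finset.mem_coe.2 (Finset.mem_of_mem_erase h)))
      · intro H hHc hHS'
        have hvH : v ∈ H.verts :=
          hHS' (Finset.mem_coe.2 (Finset.mem_insert_of_mem (Finset.mem_erase.2 ⟨Ne.symm htv, hvS⟩)))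
        have haH : a ∈ H.verts :=
          hHS' (Finset.mem_coe.2 (Finset.mem_insert_of_mem (Finset.mem_erase.2 ⟨hat, haS⟩)))
        have htH : t ∈ H.verts :=
          SteinerAux.support_subset_of_connected hT.IsAcyclic hHc hvH haH (hf v a) t htva
        intro s hs
        by_cases hst : s = t
        · exact hst ▸ htH
        · exact hHS' (Finset.mem_coe.2 (Finset.mem_insert_of_mem
            (Finset.mem_erase.2 ⟨hst, Finset.mem_coe.1 hs⟩)))
end

section
/- Let T be a tree, v ∈ V(T), and k ≥ 2 an integer. If k > ℓ(T), then every Steiner k-ecc v-set contains all the leaves of T. The same conclusion holds if v is a leaf of T and k = ℓ(T). -/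
open SimpleGraph

namespace SteinerAux

variable {V : Type} {G : SimpleGraph V}

/-- The unique path between two vertices of a tree. -/
noncomputable def tpath (hT : G.IsTree) (a b : V) : G.Walk a b :=
  (hT.existsUnique_path a b).exists.choose

lemma tpath_isPath (hT : G.IsTree) (a b : V) : (tpath hT a b).IsPath :=
  (hT.existsUnique_path a b).exists.choose_spec

lemma eq_tpath (hT : G.IsTree) {a b : V} {p : G.Walk a b} (hp : p.IsPath) :
    p = tpath hT a b :=
  (hT.existsUnique_path a b).unique hp (tpath_isPath hT a b)

lemma tpath_self (hT : G.IsTree) (a : V) : tpath hT a a = Walk.nil :=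
  (eq_tpath hT Walk.IsPath.nil).symm

/-- A path followed by an edge to a new vertex is a path. -/
lemma isPath_concat {a b c : V} {p : G.Walk a b} (hp : p.IsPath) (h : G.Adj b c)
    (hc : c ∉ p.support) : (p.concat h).IsPath := by
  rw [Walk.isPath_def, Walk.support_concat, List.nodup_append]
  exact ⟨hp.support_nodup, List.nodup_singleton c,
    fun a ha b hb => by rw [List.mem_singleton] at hb; subst hb; exact fun h => hc (h ▸ ha)⟩

/-- In a path starting at `x` in a tree, a vertex of the support adjacent to `x` must be the
second vertex. -/
lemma eq_getVert_one_of_adj [DecidableEq V] (hT : G.IsTree) {x v z : V} {p : G.Walk x v}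
    (hp : p.IsPath) (hz : z ∈ p.support) (ha : G.Adj x z) : z = p.getVert 1 := by
  have hsingle : (Walk.cons ha Walk.nil).IsPath := by
    simp [Walk.cons_isPath_iff, ha.ne]
  have ht : p.takeUntil z hz = Walk.cons ha Walk.nil :=
    (hT.existsUnique_path x z).unique (hp.takeUntil hz) hsingle
  have hspec := p.take_spec hz
  rw [ht] at hspec
  rw [← hspec]
  simp [Walk.getVert_cons_succ, Walk.getVert_zero]

lemma getVert_one_mem_support {a b : V} {q : G.Walk a b} (h : ¬ q.Nil) :
    q.getVert 1 ∈ q.support := by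
  rw [Walk.mem_support_iff_exists_getVert]
  refine ⟨1, rfl, ?_⟩
  have hlen : q.length ≠ 0 := fun hh => h (Walk.nil_iff_length_eq.mpr hh)
  omega

/-- An internal vertex of a path is not a leaf. -/
lemma not_isLeaf_of_internal [DecidableEq V] {a b u : V} {p : G.Walk a b} (hp : p.IsPath)
    (hu : u ∈ p.support) (hua : u ≠ a) (hub : u ≠ b) : ¬ IsLeaf G u := by
  intro hleaf
  set q1 := p.takeUntil u hu with hq1
  set q2 := p.dropUntil u hu with hq2
  have hq1n : ¬ q1.Nil := Walk.not_nil_of_ne (fun h => hua h.symm)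
  have hq2n : ¬ q2.Nil := Walk.not_nil_of_ne hub
  have hq1r : ¬ q1.reverse.Nil := by
    intro h
    exact hq1n (by rw [Walk.nil_iff_length_eq] at h ⊢; rwa [Walk.length_reverse] at h)
  set x := q1.reverse.getVert 1 with hx
  set y := q2.getVert 1 with hy
  have hax : G.Adj u x := Walk.adj_snd hq1r
  have hay : G.Adj u y := Walk.adj_snd hq2n
  have hxy : x ≠ y := by
    intro hxyeq
    have hxs : x ∈ q1.support := by
      have := getVert_one_mem_support hq1r
      rwa [Walk.support_reverse, List.mem_reverse] at this
    have hys : y ∈ q2.support := getVert_one_mem_support hq2n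
    have h2 : q2.support = u :: q2.tail.support := (Walk.cons_support_tail hq2n).symm
    have hyt : y ∈ q2.support.tail := by
      rw [h2, List.mem_cons] at hys
      rcases hys with h | h
      · exact absurd h.symm hay.ne
      · rw [h2, List.tail_cons]; exact h
    have hnodup := hp.support_nodup
    rw [← p.take_spec hu, Walk.support_append, List.nodup_append] at hnodup
    exact hnodup.2.2 x hxs y hyt hxyeq
  obtain ⟨t, ht⟩ := Set.ncard_eq_one.mp hleaf
  have h1 : x ∈ G.neighborSet u := hax
  have h2 : y ∈ G.neighborSet u := hay
  rw [ht] at h1 h2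
  exact hxy (h1.trans h2.symm)

/-- The support of the tree-path between two vertices of a connected subgraph is contained
in the subgraph. -/
lemma support_tpath_subset_verts [DecidableEq V] (hT : G.IsTree) {H : G.Subgraph}
    (hH : H.Connected) {a b : V} (ha : a ∈ H.verts) (hb : b ∈ H.verts) :
    ∀ x ∈ (tpath hT a b).support, x ∈ H.verts := by
  obtain ⟨q⟩ := hH ⟨a, ha⟩ ⟨b, hb⟩
  have hmap : (q.map H.hom).bypass = tpath hT a b := eq_tpath hT (Walk.bypass_isPath _)
  rw [← hmap]
  intro x hx
  have hx' : x ∈ (q.map H.hom).support := Walk.support_bypass_subset _ hx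
  rw [Walk.support_map, List.mem_map] at hx'
  obtain ⟨⟨y, hy⟩, _, rfl⟩ := hx'
  exact hy

/-- A connected subgraph of a tree has one more vertex than edges. -/
lemma ncard_edgeSet_add_one (hT : G.IsTree) [Fintype V] {H : G.Subgraph} (hH : H.Connected) :
    H.edgeSet.ncard + 1 = H.verts.ncard := by
  classical
  haveI : Fintype H.verts := H.verts.toFinite.fintype
  haveI : Fintype H.coe.edgeSet := (H.coe.edgeSet.toFinite).fintype
  have hac : H.coe.IsAcyclic := by
    intro x c hc
    exact hT.2 _ ((Walk.map_isCycle_iff_of_injective (Subgraph.hom_injective)).mpr hc)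
  have htree : H.coe.IsTree := ⟨hH.coe, hac⟩
  have hcount := htree.card_edgeFinset
  rw [edgeFinset_card] at hcount
  have h1 : H.edgeSet.ncard = Fintype.card H.coe.edgeSet := by
    rw [← Subgraph.image_coe_edgeSet_coe,
      Set.ncard_image_of_injective _ (Sym2.map.injective Subtype.val_injective),
      Set.ncard_eq_toFinset_card', Set.toFinset_card]
  have h2 : Fintype.card H.verts = H.verts.ncard := by
    rw [Set.ncard_eq_toFinset_card', Set.toFinset_card]
  rw [h1, ← h2]; exact hcount

/-- The vertex set of the minimal subtree containing `v` and `A`. -/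
def Mset (hT : G.IsTree) (v : V) (A : Finset V) : Set V :=
  ⋃ a ∈ A, {x | x ∈ (tpath hT v a).support}

lemma mem_Mset_iff (hT : G.IsTree) (v : V) (A : Finset V) (x : V) :
    x ∈ Mset hT v A ↔ ∃ a ∈ A, x ∈ (tpath hT v a).support := by
  simp [Mset]

lemma subset_Mset (hT : G.IsTree) (v : V) (A : Finset V) : ↑A ⊆ Mset hT v A := by
  intro a ha
  exact (mem_Mset_iff hT v A a).mpr ⟨a, ha, Walk.end_mem_support _⟩

lemma Mset_insert [DecidableEq V] (hT : G.IsTree) (v a : V) (A : Finset V) :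
    Mset hT v (insert a A) = {x | x ∈ (tpath hT v a).support} ∪ Mset hT v A := by
  ext x
  simp only [Mset, Set.mem_union, Set.mem_iUnion, Set.mem_setOf_eq, Finset.mem_insert,
    exists_prop]
  constructor
  · rintro ⟨c, rfl | hcA, h⟩
    exacts [Or.inl h, Or.inr ⟨c, hcA, h⟩]
  · rintro (h | ⟨c, hcA, h⟩)
    exacts [⟨_, Or.inl rfl, h⟩, ⟨c, Or.inr hcA, h⟩]

/-- The union-of-paths subgraph. -/
noncomputable def Msub (hT : G.IsTree) (v : V) (A : Finset V) : G.Subgraph :=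
  A.sup (fun a => (tpath hT v a).toSubgraph)

lemma Msub_verts (hT : G.IsTree) (v : V) (A : Finset V) :
    (Msub hT v A).verts = Mset hT v A := by
  classical
  induction A using Finset.induction with
  | empty => simp [Msub, Mset]
  | @insert a B ha ih =>
    rw [Msub, Finset.sup_insert, Subgraph.verts_sup, ← Msub, ih, Mset_insert,
      Walk.verts_toSubgraph]

lemma Msub_connected (hT : G.IsTree) (v : V) (A : Finset V) (hA : A.Nonempty) :
    (Msub hT v A).Connected := by
  classical
  induction A using Finset.induction with
  | empty => exact absurd hA (by simp)
  | @insert a B ha ih =>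
    rw [Msub, Finset.sup_insert, ← Msub]
    rcases B.eq_empty_or_nonempty with rfl | hB
    · simpa [Msub] using (tpath hT v a).toSubgraph_connected
    · refine Subgraph.connected_sup ((tpath hT v a).toSubgraph_connected).preconnected (ih hB).preconnected ?_
      refine ⟨v, ?_, ?_⟩
      · exact (tpath hT v a).start_mem_verts_toSubgraph
      · rw [Msub_verts]
        obtain ⟨b, hb⟩ := hB
        exact (mem_Mset_iff hT v B v).mpr ⟨b, hb, Walk.start_mem_support _⟩

/-- The Steiner distance formula in a tree. -/
lemma steinerDist_add_one (hT : G.IsTree) [Fintype V] (v : V) (A : Finset V) (hv : v ∈ A) :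
    steinerDist G ↑A + 1 = (Mset hT v A).ncard := by
  classical
  set T := {n | ∃ H : G.Subgraph, H.Connected ∧ ↑A ⊆ H.verts ∧ H.edgeSet.ncard = n} with hTdef
  have hconn : (Msub hT v A).Connected := Msub_connected hT v A ⟨v, hv⟩
  have hsub : ↑A ⊆ (Msub hT v A).verts := by rw [Msub_verts]; exact subset_Mset hT v A
  have hmem : (Msub hT v A).edgeSet.ncard ∈ T := ⟨Msub hT v A, hconn, hsub, rfl⟩
  have hlb : ∀ n ∈ T, (Msub hT v A).edgeSet.ncard ≤ n := by
    rintro n ⟨H, hH, hAH, rfl⟩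
    have hMH : Mset hT v A ⊆ H.verts := by
      intro x hx
      rw [mem_Mset_iff] at hx
      obtain ⟨a, ha, hxa⟩ := hx
      exact support_tpath_subset_verts hT hH (hAH hv) (hAH ha) x hxa
    have h1 := ncard_edgeSet_add_one hT hconn
    have h2 := ncard_edgeSet_add_one hT hH
    have h3 : (Mset hT v A).ncard ≤ H.verts.ncard :=
      Set.ncard_le_ncard hMH H.verts.toFinite
    rw [Msub_verts] at h1
    omega
  have : steinerDist G ↑A = (Msub hT v A).edgeSet.ncard :=
    le_antisymm (Nat.sInf_le hmem) (le_csInf ⟨_, hmem⟩ hlb)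
  rw [this]
  have h1 := ncard_edgeSet_add_one hT hconn
  rw [Msub_verts] at h1
  exact h1

/-- If `w` lies on the tree-path from `v` to `a`, the tree-path from `v` to `w` is an initial
segment of it. -/
lemma support_tpath_prefix [DecidableEq V] (hT : G.IsTree) {v a w : V}
    (h : w ∈ (tpath hT v a).support) :
    ∀ x ∈ (tpath hT v w).support, x ∈ (tpath hT v a).support := by
  have he : (tpath hT v a).takeUntil w h = tpath hT v w :=
    eq_tpath hT ((tpath_isPath hT v a).takeUntil h)
  intro x hx
  rw [← he] at hx
  exact Walk.support_takeUntil_subset _ h hx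

end SteinerAux

/-- Lemma 2.4: let `T` be a tree and `v ∈ V(T)`. If `k > ℓ(T)`, or if `v` is a leaf and
`k = ℓ(T)`, then every Steiner `k`-ecc `v`-set contains all the leaves of `T`. -/
theorem kEccSet_contains_all_leaves {V : Type} [Fintype V] (G : SimpleGraph V)
    (hT : G.IsTree) (v : V) (k : ℕ) (hk : 2 ≤ k)
    (hcase : numLeaves G < k ∨ (IsLeaf G v ∧ k = numLeaves G))
    (S : Finset V) (hvS : v ∈ S) (hcard : S.card = k)
    (hecc : steinerDist G ↑S = steinerEcc G k v) :
    ∀ u : V, IsLeaf G u → u ∈ S := by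
  classical
  open SteinerAux in
  intro u hu
  by_contra huS
  -- the finset of leaves
  set Lv : Finset V := Finset.univ.filter (fun x => IsLeaf G x) with hLv
  have hLvcard : Lv.card = numLeaves G := by
    rw [numLeaves, Set.ncard_eq_toFinset_card']
    congr 1
    ext x
    simp [hLv]
  have huLv : u ∈ Lv := by simp [hLv, hu]
  have hinter : (S ∩ Lv).card + 1 ≤ numLeaves G := by
    have hsubins : insert u (S ∩ Lv) ⊆ Lv := by
      intro x hx
      rcases Finset.mem_insert.mp hx with rfl | hx
      · exact huLv
      · exact (Finset.mem_inter.mp hx).2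
    have hcardins := Finset.card_le_card hsubins
    rwa [Finset.card_insert_of_notMem (fun hx => huS (Finset.mem_inter.mp hx).1), hLvcard]
      at hcardins
  have hsplit : (S ∩ Lv).card + (S \ Lv).card = k := by
    rw [Finset.card_inter_add_card_sdiff, hcard]
  -- find a non-leaf vertex w ∈ S with w ≠ v
  obtain ⟨w, hwS, hwv, hwNL⟩ : ∃ w, w ∈ S ∧ w ≠ v ∧ ¬ IsLeaf G w := by
    rcases hcase with hlt | ⟨hvleaf, hkeq⟩
    · have h2 : 2 ≤ (S \ Lv).card := by omega
      have h1 : 1 ≤ ((S \ Lv).erase v).card := by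
        by_cases hv' : v ∈ S \ Lv
        · rw [Finset.card_erase_of_mem hv']; omega
        · rw [Finset.erase_eq_of_notMem hv']; omega
      obtain ⟨w, hw⟩ := Finset.card_pos.mp h1
      have hw' := Finset.mem_erase.mp hw
      have hw'' := Finset.mem_sdiff.mp hw'.2
      exact ⟨w, hw''.1, hw'.1, by simpa [hLv] using hw''.2⟩
    · have h1 : 1 ≤ (S \ Lv).card := by omega
      obtain ⟨w, hw⟩ := Finset.card_pos.mp h1
      have hw'' := Finset.mem_sdiff.mp hw
      have hwv : w ≠ v := by
        rintro rfl
        exact hw''.2 (by simp [hLv, hvleaf])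
      exact ⟨w, hw''.1, hwv, by simpa [hLv] using hw''.2⟩
  set E : Finset V := S.erase w with hE
  have hSE : insert w E = S := Finset.insert_erase hwS
  have hvE : v ∈ E := Finset.mem_erase.mpr ⟨fun h => hwv h.symm, hvS⟩
  -- the key step: find a replacement vertex
  obtain ⟨u', hu'S, hu'w, hssub⟩ :
      ∃ u', u' ∉ S ∧ u' ≠ w ∧ Mset hT v S ⊂ Mset hT v (insert u' E) := by
    by_cases hwM : w ∈ Mset hT v E
    · -- case a: use the missing leaf u
      refine ⟨u, huS, fun h => hwNL (h ▸ hu), ?_⟩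
      have hQ : ∀ x ∈ (tpath hT v w).support, x ∈ Mset hT v E := by
        obtain ⟨a, haE, hwa⟩ := (mem_Mset_iff hT v E w).mp hwM
        intro x hx
        exact (mem_Mset_iff hT v E x).mpr ⟨a, haE, support_tpath_prefix hT hwa x hx⟩
      have hMS : Mset hT v S = Mset hT v E := by
        rw [← hSE, Mset_insert]
        apply Set.Subset.antisymm
        · rintro x (hx | hx)
          · exact hQ x hx
          · exact hx
        · exact Set.subset_union_right
      have hsub : Mset hT v S ⊆ Mset hT v (insert u E) := by
        rw [hMS, Mset_insert]
        exact Set.subset_union_right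
      have huM : u ∉ Mset hT v S := by
        intro hmem
        obtain ⟨a, haS, hua⟩ := (mem_Mset_iff hT v S u).mp hmem
        have huv : u ≠ v := fun h => huS (h ▸ hvS)
        have hua' : u ≠ a := fun h => huS (h ▸ haS)
        exact not_isLeaf_of_internal (tpath_isPath hT v a) hua huv hua' hu
      refine ⟨hsub, fun hback => huM (hback ?_)⟩
      rw [Mset_insert]
      exact Or.inl (Walk.end_mem_support _)
    · -- case b: grow a new leaf behind w
      have hR : (tpath hT v w).reverse.IsPath := (tpath_isPath hT v w).reverse
      have hRn : ¬ (tpath hT v w).reverse.Nil := Walk.not_nil_of_ne hwv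
      set c := (tpath hT v w).reverse.getVert 1 with hc
      have hcadj : G.Adj w c := Walk.adj_snd hRn
      obtain ⟨b, hbadj, hbc⟩ : ∃ b, G.Adj w b ∧ b ≠ c := by
        by_contra hcon
        push_neg at hcon
        have hnbr : G.neighborSet w = {c} := by
          apply Set.Subset.antisymm
          · intro z hz; exact hcon z hz
          · intro z hz; rw [Set.mem_singleton_iff] at hz; subst hz; exact hcadj
        exact hwNL (by rw [IsLeaf, hnbr]; exact Set.ncard_singleton c)
      have hbR : b ∉ (tpath hT v w).reverse.support := by
        intro hb
        exact hbc (eq_getVert_one_of_adj hT hR hb hbadj)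
      have hbQ : b ∉ (tpath hT v w).support := by
        intro hb
        apply hbR
        rw [Walk.support_reverse, List.mem_reverse]
        exact hb
      have hQb : tpath hT v b = (tpath hT v w).concat hbadj :=
        (eq_tpath hT (isPath_concat (tpath_isPath hT v w) hbadj hbQ)).symm
      have hsuppb : (tpath hT v b).support = (tpath hT v w).support ++ [b] := by
        rw [hQb, Walk.support_concat]
      set D : Finset V := Finset.univ.filter
        (fun x => w ∈ (tpath hT v x).support ∧ b ∈ (tpath hT v x).support) with hD
      have hbD : b ∈ D := by
        rw [hD, Finset.mem_filter]
        refine ⟨Finset.mem_univ _, ?_, ?_⟩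
        · rw [hsuppb]
          exact List.mem_append_left _ (Walk.end_mem_support _)
        · rw [hsuppb]
          exact List.mem_append_right _ (List.mem_singleton_self b)
      obtain ⟨u₀, hu₀D, hmax⟩ := D.exists_max_image (fun x => (tpath hT v x).length) ⟨b, hbD⟩
      rw [hD, Finset.mem_filter] at hu₀D
      obtain ⟨-, hw0, hb0⟩ := hu₀D
      have hu₀v : u₀ ≠ v := by
        rintro rfl
        simp only [tpath_self hT, Walk.mem_support_nil_iff] at hw0
        exact hwv hw0
      have hrn : ¬ (tpath hT v u₀).reverse.Nil := Walk.not_nil_of_ne hu₀v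
      have hr : (tpath hT v u₀).reverse.IsPath := (tpath_isPath hT v u₀).reverse
      set y := (tpath hT v u₀).reverse.getVert 1 with hy
      have hyadj : G.Adj u₀ y := Walk.adj_snd hrn
      have hnb : G.neighborSet u₀ = {y} := by
        apply Set.Subset.antisymm
        · intro z hz
          rw [mem_neighborSet] at hz
          by_cases hzs : z ∈ (tpath hT v u₀).reverse.support
          · exact eq_getVert_one_of_adj hT hr hzs hz
          · exfalso
            have hzp : z ∉ (tpath hT v u₀).support := by
              intro h
              apply hzs
              rw [Walk.support_reverse, List.mem_reverse]
              exact h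
            have hcpath := isPath_concat (tpath_isPath hT v u₀) hz hzp
            have heq : tpath hT v z = (tpath hT v u₀).concat hz := (eq_tpath hT hcpath).symm
            have hzD : z ∈ D := by
              rw [hD, Finset.mem_filter]
              refine ⟨Finset.mem_univ _, ?_, ?_⟩
              · rw [heq, Walk.support_concat]
                exact List.mem_append_left _ hw0
              · rw [heq, Walk.support_concat]
                exact List.mem_append_left _ hb0
            have hle := hmax z hzD
            rw [heq, Walk.length_concat] at hle
            omega
        · intro z hz
          rw [Set.mem_singleton_iff] at hz
          subst hz
          exact hyadj
      have hu₀leaf : IsLeaf G u₀ := by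
        rw [IsLeaf, hnb]
        exact Set.ncard_singleton y
      have hu₀w : u₀ ≠ w := by
        rintro rfl
        exact hbQ hb0
      have hu₀S : u₀ ∉ S := by
        intro h
        exact hwM ((mem_Mset_iff hT v E w).mpr ⟨u₀, Finset.mem_erase.mpr ⟨hu₀w, h⟩, hw0⟩)
      refine ⟨u₀, hu₀S, hu₀w, ?_, ?_⟩
      · -- Mset v S ⊆ Mset v (insert u₀ E)
        rw [← hSE, Mset_insert, Mset_insert]
        rintro x (hx | hx)
        · exact Or.inl (support_tpath_prefix hT hw0 x hx)
        · exact Or.inr hx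
      · -- strictness: b is in the new set but not the old
        intro hback
        have hbMS' : b ∈ Mset hT v (insert u₀ E) := by
          rw [Mset_insert]
          exact Or.inl hb0
        have hbMS := hback hbMS'
        obtain ⟨a, haS, hba⟩ := (mem_Mset_iff hT v S b).mp hbMS
        have hwa : w ∈ (tpath hT v a).support := by
          apply support_tpath_prefix hT hba
          rw [hsuppb]
          exact List.mem_append_left _ (Walk.end_mem_support _)
        by_cases haw : a = w
        · subst haw
          exact hbQ hba
        · exact hwM ((mem_Mset_iff hT v E w).mpr ⟨a, Finset.mem_erase.mpr ⟨haw, haS⟩, hwa⟩)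
  -- conclude: the swapped set has strictly larger Steiner distance, contradiction
  set S' : Finset V := insert u' E with hS'
  have hvS' : v ∈ S' := Finset.mem_insert.mpr (Or.inr hvE)
  have hu'E : u' ∉ E := fun h => hu'S (Finset.mem_of_mem_erase h)
  have hS'card : S'.card = k := by
    rw [hS', Finset.card_insert_of_notMem hu'E, hE, Finset.card_erase_of_mem hwS, hcard]
    omega
  have hle : steinerDist G ↑S' ≤ steinerDist G ↑S := by
    rw [hecc]
    apply le_csSup
    · refine ⟨Fintype.card V, ?_⟩
      rintro d ⟨S'', hvS'', hcard'', rfl⟩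
      have hf := SteinerAux.steinerDist_add_one hT v S'' hvS''
      have hle2 : (SteinerAux.Mset hT v S'').ncard ≤ Fintype.card V := by
        have := Set.ncard_le_ncard (Set.subset_univ (SteinerAux.Mset hT v S''))
          Set.finite_univ
        simpa [Set.ncard_univ, Nat.card_eq_fintype_card] using this
      omega
    · exact ⟨S', hvS', hS'card, rfl⟩
  have hlt : (Mset hT v S).ncard < (Mset hT v S').ncard :=
    Set.ncard_lt_ncard hssub (Set.toFinite _)
  have e1 := SteinerAux.steinerDist_add_one hT v S hvS
  have e2 := SteinerAux.steinerDist_add_one hT v S' hvS'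
  omega
end

section
/- Let T be a tree, v ∈ V(T), and k an integer with 2 ≤ k ≤ ℓ(T). If S is a Steiner k-ecc v-set, then every vertex of S \ {v} is a leaf of T. -/
open SimpleGraph

section TreeAux

variable {V : Type} {G : SimpleGraph V}

private lemma walk_eq_of_isPath (hac : G.IsAcyclic) {a b : V} {p q : G.Walk a b}
    (hp : p.IsPath) (hq : q.IsPath) : p = q :=
  congrArg Subtype.val (hac.path_unique ⟨p, hp⟩ ⟨q, hq⟩)

private lemma subgraph_coe_acyclic (hac : G.IsAcyclic) (H : G.Subgraph) : H.coe.IsAcyclic := by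
  rw [isAcyclic_iff_path_unique]
  intro a b p q
  exact Path.map_injective (f := H.hom) Subtype.val_injective a b
    (hac.path_unique _ _)

/-- A connected subgraph of a tree has one more vertex than edges. -/
private lemma conn_subgraph_card [Fintype V] (hT : G.IsTree) (H : G.Subgraph)
    (hH : H.Connected) : H.verts.ncard = H.edgeSet.ncard + 1 := by
  classical
  haveI : Fintype ↥H.verts := Fintype.ofFinite _
  haveI : Fintype H.coe.edgeSet := Fintype.ofFinite _
  have htree : H.coe.IsTree := ⟨hH.coe, subgraph_coe_acyclic hT.2 H⟩
  have hcard := htree.card_edgeFinset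
  have h1 : H.edgeSet.ncard = H.coe.edgeSet.ncard := by
    rw [← Subgraph.image_coe_edgeSet_coe,
      Set.ncard_image_of_injective _ (Sym2.map.injective Subtype.val_injective)]
  have h2 : H.coe.edgeSet.ncard = H.coe.edgeFinset.card := by
    rw [← SimpleGraph.coe_edgeFinset, Set.ncard_coe_finset]
  have h3 : H.verts.ncard = Fintype.card ↥H.verts := by
    rw [Set.ncard_eq_toFinset_card', Set.toFinset_card]
  omega

/-- A connected subgraph of a tree contains any path between two of its vertices. -/
private lemma support_subset_verts (hT : G.IsTree) (H : G.Subgraph) (hH : H.Connected)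
    {a b : V} (ha : a ∈ H.verts) (hb : b ∈ H.verts) {p : G.Walk a b} (hp : p.IsPath) :
    ∀ x ∈ p.support, x ∈ H.verts := by
  classical
  obtain ⟨w⟩ := hH ⟨a, ha⟩ ⟨b, hb⟩
  have hq : (w.toPath.1.map H.hom).IsPath :=
    Walk.map_isPath_of_injective Subgraph.hom_injective w.toPath.2
  have hpe : p = w.toPath.1.map H.hom := walk_eq_of_isPath hT.2 hp hq
  intro x hx
  have hx' : x ∈ (w.toPath.1.map H.hom).support := by rw [hpe] at hx; exact hx
  rw [Walk.support_map, List.mem_map] at hx'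
  obtain ⟨y, _, rfl⟩ := hx'
  exact y.2

/-- In an acyclic graph, a neighbor of the start of a path lying on the path must be
the second vertex. -/
private lemma second_unique (hac : G.IsAcyclic) {w b c r : V} (h : G.Adj w c) (q : G.Walk c b)
    (hP : (Walk.cons h q).IsPath) (hr : G.Adj w r) (hrs : r ∈ (Walk.cons h q).support) :
    r = c := by
  classical
  by_contra hne
  have hrw : r ≠ w := fun e => G.irrefl (e ▸ hr)
  have hrq : r ∈ q.support := by
    rw [Walk.support_cons] at hrs
    rcases List.mem_cons.mp hrs with h1 | h1
    · exact absurd h1 hrw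
    · exact h1
  rw [Walk.cons_isPath_iff] at hP
  obtain ⟨hq', hwq⟩ := hP
  have ht : (q.takeUntil r hrq).IsPath := hq'.takeUntil hrq
  have hp1 : (Walk.cons h (q.takeUntil r hrq)).IsPath := by
    rw [Walk.cons_isPath_iff]
    exact ⟨ht, fun hw => hwq (Walk.support_takeUntil_subset _ _ hw)⟩
  have hp2 : (Walk.cons hr .nil).IsPath := by
    simp [Walk.cons_isPath_iff, hrw.symm]
  have heq := walk_eq_of_isPath hac hp1 hp2
  have hlen := congrArg Walk.length heq
  simp only [Walk.length_cons, Walk.length_nil, Nat.add_left_inj] at hlen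
  exact hne (Walk.eq_of_length_eq_zero hlen).symm

/-- A vertex of degree one on a path is an endpoint. -/
private lemma mem_path_endpoints [Finite V] {a b x : V} {p : G.Walk a b} (hp : p.IsPath)
    (hx : x ∈ p.support) (hleaf : (G.neighborSet x).ncard = 1) : x = a ∨ x = b := by
  classical
  by_contra hcon
  push_neg at hcon
  obtain ⟨hxa, hxb⟩ := hcon
  have ht : (p.takeUntil x hx).IsPath := hp.takeUntil hx
  have hd : (p.dropUntil x hx).IsPath := hp.dropUntil hx
  obtain ⟨c1, h1, q1, hq1⟩ := Walk.exists_eq_cons_of_ne hxa (p.takeUntil x hx).reverse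
  obtain ⟨c2, h2, q2, hq2⟩ := Walk.exists_eq_cons_of_ne hxb (p.dropUntil x hx)
  have hc1t : c1 ∈ (p.takeUntil x hx).support := by
    have : c1 ∈ (p.takeUntil x hx).reverse.support := by
      rw [hq1, Walk.support_cons]
      exact List.mem_cons_of_mem _ q1.start_mem_support
    rwa [Walk.support_reverse, List.mem_reverse] at this
  have hc2d : c2 ∈ (p.dropUntil x hx).support.tail := by
    rw [hq2, Walk.support_cons]
    exact q2.start_mem_support
  have hnodup : ((p.takeUntil x hx).support ++ (p.dropUntil x hx).support.tail).Nodup := by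
    rw [← Walk.support_append, Walk.take_spec]
    exact hp.support_nodup
  have hne12 : c1 ≠ c2 := by
    rw [List.nodup_append] at hnodup
    exact fun e => hnodup.2.2 _ hc1t _ hc2d e
  have hsub : 1 < (G.neighborSet x).ncard := by
    rw [Set.one_lt_ncard_iff (Set.toFinite _)]
    exact ⟨c1, c2, h1, h2, hne12⟩
  omega

/-- Paths from a common vertex: initial segments. -/
private lemma isPath_support_subset (hac : G.IsAcyclic) {v x u : V} {p : G.Walk v x}
    (hp : p.IsPath) (hu : u ∈ p.support) {r : G.Walk v u} (hr : r.IsPath) :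
    ∀ y ∈ r.support, y ∈ p.support := by
  classical
  have : r = p.takeUntil u hu := walk_eq_of_isPath hac hr (hp.takeUntil hu)
  rw [this]
  exact fun y hy => Walk.support_takeUntil_subset _ _ hy

private lemma concat_isPath {a b c : V} {p : G.Walk a b} (hp : p.IsPath) (h : G.Adj b c)
    (hc : c ∉ p.support) : (p.concat h).IsPath := by
  rw [← Walk.isPath_reverse_iff, Walk.reverse_concat, Walk.cons_isPath_iff]
  refine ⟨(Walk.isPath_reverse_iff p).2 hp, ?_⟩
  rwa [Walk.support_reverse, List.mem_reverse]

private lemma exists_conn_subgraph (v : V) (P : ∀ x : V, G.Walk v x) (S : Finset V) :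
    ∃ H : G.Subgraph, H.Connected ∧
      H.verts = {v} ∪ ⋃ s ∈ (S : Set V), {y | y ∈ (P s).support} := by
  classical
  induction S using Finset.induction with
  | empty =>
    exact ⟨(Walk.nil : G.Walk v v).toSubgraph, Walk.toSubgraph_connected _, by simp⟩
  | @insert a T ha ih =>
    obtain ⟨H, hc, hv⟩ := ih
    refine ⟨(P a).toSubgraph ⊔ H, ?_, ?_⟩
    · refine Subgraph.connected_sup ((P a).toSubgraph_connected).preconnected hc.preconnected ⟨v, ?_⟩
      rw [Subgraph.verts_inf]
      exact ⟨(P a).start_mem_verts_toSubgraph, by rw [hv]; exact Or.inl rfl⟩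
    · rw [Subgraph.verts_sup, hv, Walk.verts_toSubgraph, Finset.coe_insert,
        Set.biUnion_insert]
      ext y
      simp only [Set.mem_union, Set.mem_iUnion, Set.mem_setOf_eq, Set.mem_singleton_iff,
        exists_prop]
      tauto

end TreeAux

/-- Lemma 2.5: let `T` be a tree, `v ∈ V(T)`, and `2 ≤ k ≤ ℓ(T)`. If `S` is a Steiner
`k`-ecc `v`-set, then every vertex of `S \ {v}` is a leaf of `T`. -/
theorem kEccSet_terminals_are_leaves {V : Type} [Fintype V] (G : SimpleGraph V)
    (hT : G.IsTree) (v : V) (k : ℕ) (hk2 : 2 ≤ k) (hkl : k ≤ numLeaves G)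
    (S : Finset V) (hvS : v ∈ S) (hcard : S.card = k)
    (hecc : steinerDist G ↑S = steinerEcc G k v) :
    ∀ u ∈ S, u ≠ v → IsLeaf G u := by
  classical
  intro u huS huv
  by_contra huleaf
  -- canonical paths from v
  choose P hP using fun w => hT.existsUnique_path v w
  have hPp : ∀ x, (P x).IsPath := fun x => (hP x).1
  have huniq : ∀ {x : V} (q : G.Walk v x), q.IsPath → q = P x := fun q hq => (hP _).2 q hq
  set W : Finset V → Set V := fun T => ⋃ s ∈ (T : Set V), {y | y ∈ (P s).support} with hW
  have hmemW : ∀ (T : Finset V) (s : V), s ∈ T → ∀ y ∈ (P s).support, y ∈ W T := by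
    intro T s hs y hy
    rw [hW]
    exact Set.mem_biUnion hs hy
  have hTsub : ∀ T : Finset V, (T : Set V) ⊆ W T := fun T s hs =>
    hmemW T s hs s (P s).end_mem_support
  -- general upper bound for steinerDist
  have hup : ∀ T : Finset V, v ∈ T → steinerDist G ↑T + 1 ≤ (W T).ncard := by
    intro T hvT
    obtain ⟨H, hc, hverts⟩ := exists_conn_subgraph v P T
    have hW' : H.verts = W T := by
      rw [hverts, hW]
      refine Set.union_eq_self_of_subset_left ?_
      intro y hy
      rw [Set.mem_singleton_iff] at hy
      rw [hy]
      exact Set.mem_biUnion hvT (P v).start_mem_support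
    have hd : steinerDist G ↑T ≤ H.edgeSet.ncard := by
      unfold steinerDist
      exact Nat.sInf_le ⟨H, hc, by rw [hW']; exact hTsub T, rfl⟩
    have hcnt := conn_subgraph_card hT H hc
    rw [hW'] at hcnt
    omega
  -- general lower bound for steinerDist
  have hlow : ∀ T : Finset V, v ∈ T → (W T).ncard ≤ steinerDist G ↑T + 1 := by
    intro T hvT
    have hne : {n | ∃ H : G.Subgraph,
        H.Connected ∧ (T : Set V) ⊆ H.verts ∧ H.edgeSet.ncard = n}.Nonempty := by
      obtain ⟨H, hc, hverts⟩ := exists_conn_subgraph v P T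
      refine ⟨H.edgeSet.ncard, H, hc, ?_, rfl⟩
      intro s hs
      rw [hverts]
      exact Or.inr (Set.mem_biUnion hs (P s).end_mem_support)
    have hmem : steinerDist G ↑T ∈ {n | ∃ H : G.Subgraph,
        H.Connected ∧ (T : Set V) ⊆ H.verts ∧ H.edgeSet.ncard = n} := by
      unfold steinerDist
      exact Nat.sInf_mem hne
    obtain ⟨H, hc, hsub, hedge⟩ := hmem
    have hWsub : W T ⊆ H.verts := by
      intro y hy
      rw [hW] at hy
      simp only [Set.mem_iUnion, Set.mem_setOf_eq, exists_prop] at hy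
      obtain ⟨s, hs, hy⟩ := hy
      exact support_subset_verts hT H hc (hsub hvT) (hsub hs) (hPp s) y hy
    have h5 := Set.ncard_le_ncard hWsub (Set.toFinite _)
    have hcnt := conn_subgraph_card hT H hc
    omega
  -- monotonicity of W
  have hWmono : ∀ T T' : Finset V, T ⊆ T' → W T ⊆ W T' := by
    intro T T' hTT
    rw [hW]
    exact Set.biUnion_subset_biUnion_left (by exact_mod_cast hTT)
  -- decomposition of W S
  have hWS : W S = {y | y ∈ (P u).support} ∪ W (S.erase u) := by
    conv_lhs => rw [← Finset.insert_erase huS]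
    rw [hW]
    simp only [Finset.coe_insert, Set.biUnion_insert]
  -- the key step: find a suitable replacement leaf w
  have key : ∃ w : V, w ∉ W S ∧
      {y | y ∈ (P u).support} ⊆ {y | y ∈ (P w).support} ∪ W (S.erase u) := by
    by_cases hcase : u ∈ W (S.erase u)
    · -- u lies on a path to another terminal
      have hsupu : {y | y ∈ (P u).support} ⊆ W (S.erase u) := by
        rw [hW] at hcase
        simp only [Set.mem_iUnion, Set.mem_setOf_eq, exists_prop] at hcase
        obtain ⟨s, hs, hus⟩ := hcase
        intro y hy
        exact hmemW _ s hs y (isPath_support_subset hT.2 (hPp s) hus (hPp u) y hy)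
      have hex : ∃ w, IsLeaf G w ∧ w ∉ W S := by
        by_contra hno
        push_neg at hno
        have hsub : {x | IsLeaf G x} ⊆ (↑(S.erase u) : Set V) := by
          intro x hx
          have hxW := hno x hx
          rw [hWS] at hxW
          have hxS : x ∈ S := by
            rcases hxW with hxW | hxW
            · rcases mem_path_endpoints (hPp u) hxW hx with rfl | rfl
              · exact hvS
              · exact huS
            · rw [hW] at hxW
              simp only [Set.mem_iUnion, Set.mem_setOf_eq, exists_prop] at hxW
              obtain ⟨s, hs, hxs⟩ := hxW
              rcases mem_path_endpoints (hPp s) hxs hx with rfl | rfl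
              · exact hvS
              · exact Finset.mem_of_mem_erase hs
          have hxu : x ≠ u := fun e => huleaf (e ▸ hx)
          simp only [Finset.coe_erase, Set.mem_diff, Finset.mem_coe, Set.mem_singleton_iff]
          exact ⟨hxS, hxu⟩
        have hcount := Set.ncard_le_ncard hsub (Set.toFinite _)
        rw [Set.ncard_coe_finset] at hcount
        have hcard' : (S.erase u).card = k - 1 := by
          rw [Finset.card_erase_of_mem huS, hcard]
        unfold numLeaves at hkl
        omega
      obtain ⟨w, hwleaf, hwW⟩ := hex
      exact ⟨w, hwW, fun y hy => Or.inr (hsupu hy)⟩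
    · -- u is a "leaf" of the Steiner tree: pick a branch beyond u
      obtain ⟨c, hc, q1, hq1⟩ := Walk.exists_eq_cons_of_ne huv (P u).reverse
      have hrevpath : ((P u).reverse).IsPath := (Walk.isPath_reverse_iff _).2 (hPp u)
      have hsecond : ∀ r, G.Adj u r → r ∈ (P u).support → r = c := by
        intro r hr hrs
        refine second_unique hT.2 hc q1 ?_ hr ?_
        · rw [← hq1]; exact hrevpath
        · rw [← hq1, Walk.support_reverse, List.mem_reverse]; exact hrs
      have hexq : ∃ q', G.Adj u q' ∧ q' ∉ (P u).support := by
        by_contra hno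
        push_neg at hno
        refine huleaf ?_
        have heq : G.neighborSet u = {c} := by
          apply Set.eq_singleton_iff_unique_mem.mpr
          exact ⟨hc, fun r hr => hsecond r hr (hno r hr)⟩
        rw [IsLeaf, heq, Set.ncard_singleton]
      obtain ⟨q', hq'adj, hq'n⟩ := hexq
      have hext : ∀ (x r : V) (hr : G.Adj x r), r ∉ (P x).support →
          P r = (P x).concat hr := by
        intro x r hr hrn
        exact (huniq _ (concat_isPath (hPp x) hr hrn)).symm
      have humem : ∀ (x r : V) (hr : G.Adj x r), r ∉ (P x).support →
          ∀ y ∈ (P x).support, y ∈ (P r).support := by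
        intro x r hr hrn y hy
        rw [hext x r hr hrn, Walk.support_concat, List.mem_append]
        exact Or.inl hy
      set A : Finset V := Finset.univ.filter (fun x => u ∈ (P x).support ∧ x ≠ u) with hA
      have hq'mem : q' ∈ A := by
        rw [hA, Finset.mem_filter]
        refine ⟨Finset.mem_univ _, humem u q' hq'adj hq'n u (P u).end_mem_support, ?_⟩
        exact fun e => hq'n (e ▸ (P u).end_mem_support)
      obtain ⟨w, hwA, hwmax⟩ := A.exists_max_image (fun x => (P x).length) ⟨q', hq'mem⟩
      rw [hA, Finset.mem_filter] at hwA
      obtain ⟨-, huw, hwu⟩ := hwA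
      have hwv : w ≠ v := by
        intro e
        have hnil : (Walk.nil : G.Walk v v) = P v := huniq Walk.nil Walk.IsPath.nil
        rw [e, ← hnil] at huw
        simp only [Walk.support_nil, List.mem_singleton] at huw
        exact huv huw
      obtain ⟨cw, hcw, qw, hqw⟩ := Walk.exists_eq_cons_of_ne hwv (P w).reverse
      have hwleaf : IsLeaf G w := by
        have heq : G.neighborSet w = {cw} := by
          apply Set.eq_singleton_iff_unique_mem.mpr
          refine ⟨hcw, fun r hr => ?_⟩
          by_cases hrs : r ∈ (P w).support
          · refine second_unique hT.2 hcw qw ?_ hr ?_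
            · rw [← hqw]; exact (Walk.isPath_reverse_iff _).2 (hPp w)
            · rw [← hqw, Walk.support_reverse, List.mem_reverse]; exact hrs
          · exfalso
            have hrA : r ∈ A := by
              rw [hA, Finset.mem_filter]
              refine ⟨Finset.mem_univ _, humem w r hr hrs u huw, ?_⟩
              exact fun e => hrs (e ▸ huw)
            have hle := hwmax r hrA
            rw [hext w r (show G.Adj w r from hr) hrs, Walk.length_concat] at hle
            omega
        rw [IsLeaf, heq, Set.ncard_singleton]
      have hwWS : w ∉ W S := by
        intro hmem
        rw [hWS] at hmem
        rcases hmem with hmem | hmem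
        · rcases mem_path_endpoints (hPp u) hmem hwleaf with rfl | rfl
          · exact hwv rfl
          · exact hwu rfl
        · rw [hW] at hmem
          simp only [Set.mem_iUnion, Set.mem_setOf_eq, exists_prop] at hmem
          obtain ⟨s, hs, hws⟩ := hmem
          rcases mem_path_endpoints (hPp s) hws hwleaf with rfl | heq2
          · exact hwv rfl
          · subst heq2
            exact hcase (hmemW _ w hs u huw)
      refine ⟨w, hwWS, fun y hy => Or.inl ?_⟩
      exact isPath_support_subset hT.2 (hPp w) huw (hPp u) y hy
  -- conclude
  obtain ⟨w, hwWS, hsupu⟩ := key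
  have hwSe : w ∉ S.erase u := fun hmem =>
    hwWS (hWmono _ _ (Finset.erase_subset u S) (hTsub (S.erase u) hmem))
  set S' : Finset V := insert w (S.erase u) with hS'
  have hvS' : v ∈ S' := Finset.mem_insert_of_mem (Finset.mem_erase.mpr ⟨Ne.symm huv, hvS⟩)
  have hcS' : S'.card = k := by
    rw [hS', Finset.card_insert_of_notMem hwSe, Finset.card_erase_of_mem huS, hcard]
    omega
  have hWS' : W S' = {y | y ∈ (P w).support} ∪ W (S.erase u) := by
    rw [hS', hW]
    simp only [Finset.coe_insert, Set.biUnion_insert]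
  have hinsert : insert w (W S) ⊆ W S' := by
    intro y hy
    rcases Set.mem_insert_iff.mp hy with rfl | hy
    · rw [hWS']
      exact Or.inl (P y).end_mem_support
    · rw [hWS] at hy
      rw [hWS']
      rcases hy with hy | hy
      · exact hsupu hy
      · exact Or.inr hy
  have h3 : (W S).ncard + 1 ≤ (W S').ncard := by
    have h4 := Set.ncard_le_ncard hinsert (Set.toFinite _)
    rwa [Set.ncard_insert_of_notMem hwWS (Set.toFinite _)] at h4
  have hbdd : BddAbove {d | ∃ T : Finset V, v ∈ T ∧ T.card = k ∧ steinerDist G ↑T = d} := by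
    refine ⟨Fintype.card V, fun d hd => ?_⟩
    obtain ⟨T, hvT, -, rfl⟩ := hd
    have h6 := hup T hvT
    have h5 : (W T).ncard ≤ Fintype.card V := by
      have h7 := Set.ncard_le_ncard (Set.subset_univ (W T)) (Set.toFinite _)
      rwa [Set.ncard_univ, Nat.card_eq_fintype_card] at h7
    omega
  have h1 : steinerDist G ↑S' ≤ steinerEcc G k v := by
    unfold steinerEcc
    exact le_csSup hbdd ⟨S', hvS', hcS', rfl⟩
  rw [← hecc] at h1
  have h2 := hup S hvS
  have h4 := hlow S' hvS'
  omega
end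

section
/- Let T be a tree, v ∈ V(T), and k ≥ 2 an integer. Then every Steiner k-ecc v-tree contains (as a subgraph) a longest path of T starting at v, i.e., a path of length ecc_2(v,T) with endpoint v. -/
open SimpleGraph

/-- The standard eccentricity `ecc_2(v, G)`: the maximum distance from `v` to a vertex. -/
noncomputable def ecc2 {V : Type} [Fintype V] (G : SimpleGraph V) (v : V) : ℕ :=
  Finset.univ.sup (fun u => G.dist v u)

/-- The distance from a vertex `u` to a set `A` of vertices. -/
noncomputable def distToSet {V : Type} (G : SimpleGraph V) (u : V) (A : Set V) : ℕ :=
  sInf ((G.dist u) '' A)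

/-- The eccentricity of a set `A` of vertices (e.g. of a subgraph such as a path):
the maximum over all vertices `u` of the distance from `u` to `A`. -/
noncomputable def eccOfSet {V : Type} [Fintype V] (G : SimpleGraph V) (A : Set V) : ℕ :=
  Finset.univ.sup (fun u => distToSet G u A)

namespace KEccAux

variable {V : Type} {G : SimpleGraph V}

/-- The unique path between two vertices of a tree. -/
noncomputable def tpath (hG : G.IsTree) (a b : V) : G.Walk a b :=
  (hG.existsUnique_path a b).choose

lemma tpath_isPath (hG : G.IsTree) (a b : V) : (tpath hG a b).IsPath :=
  (hG.existsUnique_path a b).choose_spec.1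

lemma tpath_eq (hG : G.IsTree) {a b : V} (p : G.Walk a b) (hp : p.IsPath) :
    p = tpath hG a b :=
  (hG.existsUnique_path a b).choose_spec.2 p hp

lemma tpath_length (hG : G.IsTree) (a b : V) : (tpath hG a b).length = G.dist a b := by
  obtain ⟨p, hp, hl⟩ := hG.isConnected.exists_path_of_dist a b
  rw [← tpath_eq hG p hp]
  exact hl

lemma geo_split [DecidableEq V] (hG : G.IsTree) {a c u : V} (p : G.Walk a c)
    (hp : p.length = G.dist a c) (hu : u ∈ p.support) :
    G.dist a u + G.dist u c = G.dist a c ∧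
      (p.takeUntil u hu).length = G.dist a u ∧
      (p.dropUntil u hu).length = G.dist u c := by
  have h1 := dist_le (p.takeUntil u hu)
  have h2 := dist_le (p.dropUntil u hu)
  have h3 : (p.takeUntil u hu).length + (p.dropUntil u hu).length = p.length := by
    rw [← Walk.length_append, p.take_spec hu]
  have h4 := hG.isConnected.dist_triangle (u := a) (v := u) (w := c)
  omega

lemma dist_add_of_mem (hG : G.IsTree) {a c u : V} (hu : u ∈ (tpath hG a c).support) :
    G.dist a u + G.dist u c = G.dist a c := by
  classical
  exact (geo_split hG _ (tpath_length hG a c) hu).1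

lemma takeUntil_eq [DecidableEq V] (hG : G.IsTree) {a c u : V}
    (hu : u ∈ (tpath hG a c).support) :
    (tpath hG a c).takeUntil u hu = tpath hG a u :=
  tpath_eq hG _ ((tpath_isPath hG a c).takeUntil hu)

lemma support_subset (hG : G.IsTree) {a c w : V} (hw : w ∈ (tpath hG a c).support) :
    (tpath hG a w).support ⊆ (tpath hG a c).support := by
  classical
  rw [← takeUntil_eq hG hw]
  exact Walk.support_takeUntil_subset _ hw

lemma edges_subset (hG : G.IsTree) {a c w : V} (hw : w ∈ (tpath hG a c).support) :
    (tpath hG a w).edges ⊆ (tpath hG a c).edges := by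
  classical
  rw [← takeUntil_eq hG hw]
  exact Walk.edges_takeUntil_subset _ hw

lemma mem_support_of_le (hG : G.IsTree) {a c u w : V}
    (hu : u ∈ (tpath hG a c).support) (hw : w ∈ (tpath hG a c).support)
    (hle : G.dist a u ≤ G.dist a w) : u ∈ (tpath hG a w).support := by
  classical
  have hA := dist_add_of_mem hG hu
  have hB := dist_add_of_mem hG hw
  have hsp := (tpath hG a c).take_spec hw
  have hu' : u ∈ ((tpath hG a c).takeUntil w hw).support ∨
      u ∈ ((tpath hG a c).dropUntil w hw).support := by
    rw [← Walk.mem_support_append_iff, hsp]; exact hu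
  rcases hu' with h | h
  · rwa [takeUntil_eq hG hw] at h
  · have hdl : ((tpath hG a c).dropUntil w hw).length = G.dist w c :=
      (geo_split hG _ (tpath_length hG a c) hw).2.2
    have hC := (geo_split hG _ hdl h).1
    have : G.dist w u = 0 := by omega
    have huw : u = w := ((hG.isConnected w u).dist_eq_zero_iff).mp this |>.symm
    subst huw
    exact Walk.end_mem_support _

lemma adj_mem_edges (hG : G.IsTree) {u u' : V} (hadj : G.Adj u u') :
    ∀ {a c : V} (p : G.Walk a c), p.IsPath → u ∈ p.support → u' ∈ p.support →
      s(u, u') ∈ p.edges := by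
  classical
  intro a c p
  induction p with
  | nil =>
    intro _ hu hu'
    rw [Walk.mem_support_nil_iff] at hu hu'
    exact absurd (hu' ▸ hu) hadj.ne
  | @cons a b c h q ih =>
    intro hp hu hu'
    have hq : q.IsPath := (Walk.cons_isPath_iff h q).mp hp |>.1
    have hna : a ∉ q.support := (Walk.cons_isPath_iff h q).mp hp |>.2
    rw [Walk.support_cons, List.mem_cons] at hu hu'
    have main : ∀ z, z ∈ q.support → G.Adj a z → s(a, z) ∈ (Walk.cons h q).edges := by
      intro z hz hadj'
      by_cases hzb : z = b
      · subst hzb; rw [Walk.edges_cons]; exact List.mem_cons_self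
      · exfalso
        have hP1 : (Walk.cons hadj' Walk.nil : G.Walk a z).IsPath := by
          rw [Walk.cons_isPath_iff]
          refine ⟨Walk.IsPath.nil, ?_⟩
          rw [Walk.mem_support_nil_iff]
          rintro rfl
          exact hna hz
        have hP2 : (Walk.cons h (q.takeUntil z hz) : G.Walk a z).IsPath := by
          rw [Walk.cons_isPath_iff]
          exact ⟨hq.takeUntil hz, fun hmem => hna (Walk.support_takeUntil_subset _ hz hmem)⟩
        have heq : (Walk.cons hadj' Walk.nil : G.Walk a z)
            = Walk.cons h (q.takeUntil z hz) := by
          rw [tpath_eq hG _ hP1, tpath_eq hG _ hP2]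
        have hlen : (Walk.cons hadj' Walk.nil : G.Walk a z).length
            = (Walk.cons h (q.takeUntil z hz)).length := by rw [heq]
        simp only [Walk.length_cons, Walk.length_nil] at hlen
        have : (q.takeUntil z hz).length = 0 := by omega
        exact hzb (Walk.eq_of_length_eq_zero this).symm
    rcases hu with rfl | hu
    · rcases hu' with rfl | hu'
      · exact absurd rfl hadj.ne
      · exact main u' hu' hadj
    · rcases hu' with rfl | hu'
      · rw [Sym2.eq_swap]; exact main u hu hadj.symm
      · rw [Walk.edges_cons]
        exact List.mem_cons_of_mem _ (ih hq hu hu')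

lemma ncard_edges_diff (hG : G.IsTree) {a c u : V} (hu : u ∈ (tpath hG a c).support) :
    ({e | e ∈ (tpath hG a c).edges} \ {e | e ∈ (tpath hG a u).edges} : Set (Sym2 V)).ncard
      = G.dist a c - G.dist a u := by
  classical
  set p := tpath hG a c with hpdef
  have hsp := p.take_spec hu
  have hsplit := geo_split hG p (tpath_length hG a c) hu
  have hdd := dist_add_of_mem hG hu
  have hed : p.edges = (tpath hG a u).edges ++ (p.dropUntil u hu).edges := by
    conv_lhs => rw [← hsp]
    rw [Walk.edges_append, takeUntil_eq hG hu]
  have hnd : p.edges.Nodup :=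
    Walk.edges_nodup_of_support_nodup (tpath_isPath hG a c).support_nodup
  rw [hed] at hnd
  have hdisj := List.disjoint_of_nodup_append hnd
  have hset : {e | e ∈ p.edges} \ {e | e ∈ (tpath hG a u).edges}
      = {e | e ∈ (p.dropUntil u hu).edges} := by
    ext e
    simp only [Set.mem_diff, Set.mem_setOf_eq, hed, List.mem_append]
    constructor
    · rintro ⟨h1 | h1, h2⟩
      · exact absurd h1 h2
      · exact h1
    · intro h
      exact ⟨Or.inr h, fun h' => hdisj h' h⟩
  rw [hset]
  have hnd2 : (p.dropUntil u hu).edges.Nodup := (List.nodup_append.mp hnd).2.1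
  have : {e | e ∈ (p.dropUntil u hu).edges} = ↑(p.dropUntil u hu).edges.toFinset := by
    simp [List.coe_toFinset]
  rw [this, Set.ncard_coe_finset, List.toFinset_card_of_nodup hnd2, Walk.length_edges,
    hsplit.2.2]
  omega

end KEccAux

namespace KEccAux2

variable {V : Type} {G : SimpleGraph V}

lemma tpath_edges_subset_subgraph (hG : G.IsTree) {v s : V} (H : G.Subgraph)
    (hc : H.Connected) (hv : v ∈ H.verts) (hs : s ∈ H.verts) :
    ∀ e ∈ (KEccAux.tpath hG v s).edges, e ∈ H.edgeSet := by
  classical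
  obtain ⟨p, hp⟩ :=
    (Subgraph.preconnected_iff_forall_exists_walk_subgraph H).mp hc.preconnected hv hs
  have heq : p.bypass = KEccAux.tpath hG v s := KEccAux.tpath_eq hG _ p.bypass_isPath
  intro e he
  rw [← heq] at he
  have he' : e ∈ p.edges := p.edges_bypass_subset he
  have : e ∈ p.toSubgraph.edgeSet := (p.mem_edges_toSubgraph).mpr he'
  exact Subgraph.edgeSet_mono hp this

lemma sup_connected {v : V} (f : V → G.Subgraph) (hf : ∀ s, (f s).Connected)
    (hfv : ∀ s, v ∈ (f s).verts) (A : Finset V) (hA : A.Nonempty) :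
    (A.sup f).Connected ∧ v ∈ (A.sup f).verts := by
  classical
  induction A using Finset.cons_induction with
  | empty => exact absurd hA (by simp)
  | cons a B ha ih =>
    rcases B.eq_empty_or_nonempty with rfl | hB
    · simpa using ⟨hf a, hfv a⟩
    · obtain ⟨ihc, ihv⟩ := ih hB
      rw [Finset.sup_cons]
      constructor
      · exact Subgraph.connected_sup (hf a).preconnected ihc.preconnected ⟨v, by rw [Subgraph.verts_inf]; exact ⟨hfv a, ihv⟩⟩
      · rw [Subgraph.verts_sup]; exact Or.inl (hfv a)

lemma sup_edgeSet (f : V → G.Subgraph) (A : Finset V) :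
    (A.sup f).edgeSet = {e | ∃ s ∈ A, e ∈ (f s).edgeSet} := by
  classical
  induction A using Finset.cons_induction with
  | empty => simp
  | cons a B ha ih =>
    rw [Finset.sup_cons, Subgraph.edgeSet_sup, ih]
    ext e
    simp [Finset.mem_cons, or_and_right, exists_or]

/-- The union of the edge sets of the paths from `v` to the members of `A`. -/
def UE (hG : G.IsTree) (v : V) (A : Finset V) : Set (Sym2 V) :=
  {e | ∃ s ∈ A, e ∈ (KEccAux.tpath hG v s).edges}

lemma UE_insert [DecidableEq V] (hG : G.IsTree) (v a : V) (A : Finset V) :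
    UE hG v (insert a A) = {e | e ∈ (KEccAux.tpath hG v a).edges} ∪ UE hG v A := by
  classical
  ext e
  simp [UE, Finset.mem_insert, or_and_right, exists_or]

lemma steinerDist_eq (hG : G.IsTree) {v : V} [Fintype V] (A : Finset V) (hv : v ∈ A) :
    steinerDist G ↑A = (UE hG v A).ncard := by
  classical
  set K : G.Subgraph := A.sup (fun s => (KEccAux.tpath hG v s).toSubgraph) with hK
  obtain ⟨hKc, -⟩ := sup_connected (fun s => (KEccAux.tpath hG v s).toSubgraph)
    (fun s => (KEccAux.tpath hG v s).toSubgraph_connected)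
    (fun s => (KEccAux.tpath hG v s).start_mem_verts_toSubgraph) A ⟨v, hv⟩
  have hKv : ↑A ⊆ K.verts := by
    intro s hs
    exact Subgraph.verts_mono (Finset.le_sup hs)
      ((KEccAux.tpath hG v s).end_mem_verts_toSubgraph)
  have hKe : K.edgeSet = UE hG v A := by
    rw [hK, sup_edgeSet]
    ext e
    simp [UE, Walk.mem_edges_toSubgraph]
  have hmem : (UE hG v A).ncard ∈
      {n | ∃ H : G.Subgraph, H.Connected ∧ ↑A ⊆ H.verts ∧ H.edgeSet.ncard = n} :=
    ⟨K, hKc, hKv, by rw [hKe]⟩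
  have hlb : ∀ n ∈ {n | ∃ H : G.Subgraph, H.Connected ∧ ↑A ⊆ H.verts ∧ H.edgeSet.ncard = n},
      (UE hG v A).ncard ≤ n := by
    rintro n ⟨H', hc', hs', rfl⟩
    apply Set.ncard_le_ncard _ (Set.toFinite _)
    rintro e ⟨s, hsA, he⟩
    exact tpath_edges_subset_subgraph hG H' hc' (hs' hv) (hs' hsA) e he
  unfold steinerDist
  exact le_antisymm (Nat.sInf_le hmem) (le_csInf ⟨_, hmem⟩ hlb)

lemma steinerEcc_bddAbove [Fintype V] (hG : G.IsTree) (v : V) (k : ℕ) :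
    BddAbove {d | ∃ S : Finset V, v ∈ S ∧ S.card = k ∧ steinerDist G ↑S = d} := by
  refine ⟨(Set.univ : Set (Sym2 V)).ncard, ?_⟩
  rintro d ⟨S, h1, _, rfl⟩
  rw [steinerDist_eq hG S h1]
  exact Set.ncard_le_ncard (Set.subset_univ _) (Set.toFinite _)

end KEccAux2

open KEccAux KEccAux2 in
/-- Lemma 2.6: every Steiner `k`-ecc `v`-tree of a tree `T` contains a longest path of `T`
starting at `v`, i.e. a path from `v` of length `ecc_2(v,T)` all of whose edges lie in the
tree. -/
theorem kEccTree_contains_longest_path {V : Type} [Fintype V] (G : SimpleGraph V)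
    (hT : G.IsTree) (v : V) (k : ℕ) (hk : 2 ≤ k)
    (S : Finset V) (hvS : v ∈ S) (hcard : S.card = k)
    (hecc : steinerDist G ↑S = steinerEcc G k v)
    (H : G.Subgraph) (hHc : H.Connected) (hHs : ↑S ⊆ H.verts)
    (hHe : H.edgeSet.ncard = steinerEcc G k v) :
    ∃ (b : V) (P : G.Walk v b), P.IsPath ∧ P.length = ecc2 G v ∧
      ∀ e ∈ P.edges, e ∈ H.edgeSet := by
  classical
  -- abbreviations
  have hconn := hT.isConnected
  -- the vertex attaining the eccentricity
  obtain ⟨x, -, hx⟩ := Finset.exists_mem_eq_sup Finset.univ ⟨v, Finset.mem_univ v⟩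
    (fun u => G.dist v u)
  have hxE : ecc2 G v = G.dist v x := hx
  have hEle : ∀ u : V, G.dist v u ≤ ecc2 G v := fun u => Finset.le_sup (Finset.mem_univ u)
  -- it suffices to find an eccentric vertex lying on the path from `v` to some `s ∈ S`
  suffices hsuf : ∃ b : V, G.dist v b = ecc2 G v ∧ ∃ s ∈ S, b ∈ (tpath hT v s).support by
    obtain ⟨b, hbE, s, hsS, hbs⟩ := hsuf
    refine ⟨b, tpath hT v b, tpath_isPath hT v b, by rw [tpath_length hT v b, hbE], ?_⟩
    intro e he
    have he' : e ∈ (tpath hT v s).edges := edges_subset hT hbs he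
    exact tpath_edges_subset_subgraph hT H hHc (hHs (Finset.mem_coe.mpr hvS))
      (hHs (Finset.mem_coe.mpr hsS)) e he'
  by_contra hcontra
  push_neg at hcontra
  -- every vertex on a path from v to a member of S is at distance < ecc2
  have hlt : ∀ u : V, (∃ s ∈ S, u ∈ (tpath hT v s).support) → G.dist v u < G.dist v x := by
    intro u hu
    rcases lt_or_eq_of_le (hEle u) with h | h
    · rwa [hxE] at h
    · obtain ⟨s, hsS, hus⟩ := hu
      exact absurd hus (hcontra u h s hsS)
  -- the deepest vertex on the path v→x that is covered by S-paths
  set T0 : Finset V := Finset.univ.filter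
    (fun u => u ∈ (tpath hT v x).support ∧ ∃ s ∈ S, u ∈ (tpath hT v s).support) with hT0
  have hT0ne : T0.Nonempty := by
    refine ⟨v, ?_⟩
    simp only [hT0, Finset.mem_filter, Finset.mem_univ, true_and]
    exact ⟨Walk.start_mem_support _, v, hvS, Walk.start_mem_support _⟩
  obtain ⟨w, hwT0, hwmax⟩ := T0.exists_max_image (fun u => G.dist v u) hT0ne
  rw [hT0, Finset.mem_filter] at hwT0
  obtain ⟨-, hwx, s₀, hs₀S, hws₀⟩ := hwT0
  -- choose ℓ ∈ S, ℓ ≠ v, with w on the path v→ℓ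
  obtain ⟨ℓ, hℓS, hℓv, hwℓ⟩ :
      ∃ ℓ, ℓ ∈ S ∧ ℓ ≠ v ∧ w ∈ (tpath hT v ℓ).support := by
    by_cases hwv : w = v
    · obtain ⟨ℓ, hℓ⟩ : (S.erase v).Nonempty := by
        rw [← Finset.card_pos, Finset.card_erase_of_mem hvS, hcard]; omega
      exact ⟨ℓ, Finset.mem_of_mem_erase hℓ, Finset.ne_of_mem_erase hℓ,
        hwv ▸ Walk.start_mem_support _⟩
    · refine ⟨s₀, hs₀S, ?_, hws₀⟩
      intro heq
      rw [heq] at hws₀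
      have hvv : (Walk.nil : G.Walk v v) = tpath hT v v := tpath_eq hT _ Walk.IsPath.nil
      rw [← hvv, Walk.mem_support_nil_iff] at hws₀
      exact hwv hws₀
  set S'' : Finset V := S.erase ℓ with hS''
  have hvS'' : v ∈ S'' := Finset.mem_erase.mpr ⟨Ne.symm hℓv, hvS⟩
  have hS''sub : S'' ⊆ S := Finset.erase_subset _ _
  -- deepest covered vertex on path v→ℓ w.r.t. S''
  set T1 : Finset V := Finset.univ.filter
    (fun u => u ∈ (tpath hT v ℓ).support ∧ ∃ s ∈ S'', u ∈ (tpath hT v s).support) with hT1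
  have hT1ne : T1.Nonempty := by
    refine ⟨v, ?_⟩
    simp only [hT1, Finset.mem_filter, Finset.mem_univ, true_and]
    exact ⟨Walk.start_mem_support _, v, hvS'', Walk.start_mem_support _⟩
  obtain ⟨w', hw'T1, hw'max⟩ := T1.exists_max_image (fun u => G.dist v u) hT1ne
  rw [hT1, Finset.mem_filter] at hw'T1
  obtain ⟨-, hw'ℓ, s₁, hs₁S'', hw's₁⟩ := hw'T1
  -- deepest covered vertex on path v→x w.r.t. S''
  set T2 : Finset V := Finset.univ.filter
    (fun u => u ∈ (tpath hT v x).support ∧ ∃ s ∈ S'', u ∈ (tpath hT v s).support) with hT2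
  have hT2ne : T2.Nonempty := by
    refine ⟨v, ?_⟩
    simp only [hT2, Finset.mem_filter, Finset.mem_univ, true_and]
    exact ⟨Walk.start_mem_support _, v, hvS'', Walk.start_mem_support _⟩
  obtain ⟨w₁, hw₁T2, hw₁max⟩ := T2.exists_max_image (fun u => G.dist v u) hT2ne
  rw [hT2, Finset.mem_filter] at hw₁T2
  obtain ⟨-, hw₁x, s₂, hs₂S'', hw₁s₂⟩ := hw₁T2
  -- chain of facts
  have F1 : G.dist v w₁ ≤ G.dist v w := by
    refine hwmax w₁ ?_
    simp only [hT0, Finset.mem_filter, Finset.mem_univ, true_and]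
    exact ⟨hw₁x, s₂, hS''sub hs₂S'', hw₁s₂⟩
  have F2 : w₁ ∈ (tpath hT v w).support := mem_support_of_le hT hw₁x hwx F1
  have F3 : w₁ ∈ (tpath hT v ℓ).support := support_subset hT hwℓ F2
  have F4 : G.dist v w₁ ≤ G.dist v w' := by
    refine hw'max w₁ ?_
    simp only [hT1, Finset.mem_filter, Finset.mem_univ, true_and]
    exact ⟨F3, s₂, hs₂S'', hw₁s₂⟩
  -- the intersection of the path v→x with the union of S''-paths is within the path v→w₁
  have hint : ∀ e ∈ ({e | e ∈ (tpath hT v x).edges} : Set (Sym2 V)),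
      e ∈ UE hT v S'' → e ∈ (tpath hT v w₁).edges := by
    intro e
    induction e using Sym2.ind with
    | _ a b =>
      intro hex ⟨s, hs, hes⟩
      have hax : a ∈ (tpath hT v x).support := Walk.fst_mem_support_of_mem_edges _ hex
      have hbx : b ∈ (tpath hT v x).support := Walk.snd_mem_support_of_mem_edges _ hex
      have has : a ∈ (tpath hT v s).support := Walk.fst_mem_support_of_mem_edges _ hes
      have hbs : b ∈ (tpath hT v s).support := Walk.snd_mem_support_of_mem_edges _ hes
      have hale : G.dist v a ≤ G.dist v w₁ := by
        refine hw₁max a ?_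
        simp only [hT2, Finset.mem_filter, Finset.mem_univ, true_and]
        exact ⟨hax, s, hs, has⟩
      have hble : G.dist v b ≤ G.dist v w₁ := by
        refine hw₁max b ?_
        simp only [hT2, Finset.mem_filter, Finset.mem_univ, true_and]
        exact ⟨hbx, s, hs, hbs⟩
      have haw : a ∈ (tpath hT v w₁).support := mem_support_of_le hT hax hw₁x hale
      have hbw : b ∈ (tpath hT v w₁).support := mem_support_of_le hT hbx hw₁x hble
      have hadj : G.Adj a b := (tpath hT v x).adj_of_mem_edges hex
      exact adj_mem_edges hT hadj _ (tpath_isPath hT v w₁) haw hbw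
  -- counting
  have card1 : G.dist v x - G.dist v w₁
      ≤ (({e | e ∈ (tpath hT v x).edges} : Set (Sym2 V)) \ UE hT v S'').ncard := by
    rw [← ncard_edges_diff hT hw₁x]
    refine Set.ncard_le_ncard ?_ (Set.toFinite _)
    rintro e ⟨he1, he2⟩
    exact ⟨he1, fun hUE => he2 (hint e he1 hUE)⟩
  have hPw'sub : ({e | e ∈ (tpath hT v w').edges} : Set (Sym2 V)) ⊆ UE hT v S'' := by
    intro e he
    exact ⟨s₁, hs₁S'', edges_subset hT hw's₁ he⟩
  have card2 : (({e | e ∈ (tpath hT v ℓ).edges} : Set (Sym2 V)) \ UE hT v S'').ncard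
      ≤ G.dist v ℓ - G.dist v w' := by
    rw [← ncard_edges_diff hT hw'ℓ]
    refine Set.ncard_le_ncard ?_ (Set.toFinite _)
    rintro e ⟨he1, he2⟩
    exact ⟨he1, fun hP => he2 (hPw'sub hP)⟩
  -- the new set S'
  set S' : Finset V := insert x S'' with hS'
  have hxW : x ∈ (tpath hT v x).support := Walk.end_mem_support _
  have hxS : x ∉ S'' := by
    intro hx''
    exact absurd (hlt x ⟨x, hS''sub hx'', Walk.end_mem_support _⟩) (lt_irrefl _)
  have hvS' : v ∈ S' := Finset.mem_insert_of_mem hvS''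
  have hcard' : S'.card = k := by
    rw [hS', Finset.card_insert_of_notMem hxS, hS'', Finset.card_erase_of_mem hℓS, hcard]
    omega
  -- cardinality comparison
  have hU1 : UE hT v S' = {e | e ∈ (tpath hT v x).edges} ∪ UE hT v S'' :=
    UE_insert hT v x S''
  have hSins : S = insert ℓ S'' := (Finset.insert_erase hℓS).symm
  have hU2 : UE hT v S = {e | e ∈ (tpath hT v ℓ).edges} ∪ UE hT v S'' := by
    rw [hSins]; exact UE_insert hT v ℓ S''
  have hn1 : (UE hT v S').ncard
      = (({e | e ∈ (tpath hT v x).edges} : Set (Sym2 V)) \ UE hT v S'').ncard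
        + (UE hT v S'').ncard := by
    rw [hU1, ← Set.diff_union_self]
    exact Set.ncard_union_eq (Set.disjoint_sdiff_left) (Set.toFinite _) (Set.toFinite _)
  have hn2 : (UE hT v S).ncard
      = (({e | e ∈ (tpath hT v ℓ).edges} : Set (Sym2 V)) \ UE hT v S'').ncard
        + (UE hT v S'').ncard := by
    rw [hU2, ← Set.diff_union_self]
    exact Set.ncard_union_eq (Set.disjoint_sdiff_left) (Set.toFinite _) (Set.toFinite _)
  have hdℓx : G.dist v ℓ < G.dist v x := hlt ℓ ⟨ℓ, hℓS, Walk.end_mem_support _⟩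
  have hw'ℓle : G.dist v w' ≤ G.dist v ℓ := by
    have := dist_add_of_mem hT hw'ℓ; omega
  have hw₁xle : G.dist v w₁ ≤ G.dist v x := by
    have := dist_add_of_mem hT hw₁x; omega
  have hkey : (UE hT v S).ncard < (UE hT v S').ncard := by omega
  -- contradiction with maximality
  have hle : steinerDist G ↑S' ≤ steinerEcc G k v := by
    apply le_csSup (steinerEcc_bddAbove hT v k)
    exact ⟨S', hvS', hcard', rfl⟩
  rw [← hecc, steinerDist_eq hT S' hvS', steinerDist_eq hT S hvS] at hle
  omega
end

section
/- Let v be a vertex of a tree T and let S = {v, x, y} be a Steiner 3-ecc v-set such that the v,x-path P in T is a longest path of T starting at v (its length is ecc_2(v,T)). Then d_T(y, P) = ecc_T(P), i.e., y is a vertex at maximum distance from the path P. -/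
open SimpleGraph

namespace ThirdTerminal

variable {V : Type} [Fintype V] [DecidableEq V] {G : SimpleGraph V}

/-- Edges of a subgraph walk mapped to `G` lie in the subgraph's edge set. -/
lemma edges_map_hom_subset {H : G.Subgraph} {a b : H.verts} (p : H.coe.Walk a b) :
    ∀ e ∈ (p.map H.hom).edges, e ∈ H.edgeSet := by
  induction p with
  | nil => simp
  | cons h p ih =>
    intro e he
    rw [Walk.map_cons, Walk.edges_cons, List.mem_cons] at he
    rcases he with rfl | he
    · exact h
    · exact ih e he

/-- In a connected subgraph, any two vertices are joined by a walk in `G` whose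
edges lie in the subgraph. -/
lemma exists_walk_of_connected {H : G.Subgraph} (hH : H.Connected) {a b : V}
    (ha : a ∈ H.verts) (hb : b ∈ H.verts) :
    ∃ W : G.Walk a b, ∀ e ∈ W.edges, e ∈ H.edgeSet := by
  have hr : H.coe.Reachable ⟨a, ha⟩ ⟨b, hb⟩ := (Subgraph.connected_iff'.mp hH).preconnected _ _
  obtain ⟨p⟩ := hr
  exact ⟨p.map H.hom, edges_map_hom_subset p⟩

/-- First-hit prefix: given a path ending in a set `A`, there is a path to some `w ∈ A`
that meets `A` only at `w`, with edges and support inside the original. -/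
lemma first_hit {A : Set V} : ∀ {u b : V} (Q : G.Walk u b), Q.IsPath → b ∈ A →
    ∃ (w : V) (_ : w ∈ A) (R : G.Walk u w), R.IsPath ∧ (∀ e ∈ R.edges, e ∈ Q.edges) ∧
      (∀ z ∈ R.support, z ∈ Q.support) ∧ (∀ z ∈ R.support, z ∈ A → z = w) := by
  intro u b Q
  induction Q with
  | nil =>
    intro _ hb
    exact ⟨_, hb, .nil, Walk.IsPath.nil, by simp, by simp, by simp⟩
  | @cons u c b h p ih =>
    intro hQ hb
    by_cases hu : u ∈ A
    · refine ⟨u, hu, .nil, Walk.IsPath.nil, by simp, ?_, ?_⟩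
      · intro z hz; simp at hz; subst hz; exact Walk.start_mem_support _
      · intro z hz; simp at hz; subst hz; exact fun _ => rfl
    · obtain ⟨w, hw, R, hRp, hRe, hRs, hRA⟩ := ih (hQ.of_cons) hb
      refine ⟨w, hw, .cons h R, ?_, ?_, ?_, ?_⟩
      · rw [Walk.cons_isPath_iff]
        refine ⟨hRp, fun hus => ?_⟩
        exact ((Walk.cons_isPath_iff _ _).mp hQ).2 (hRs u hus)
      · intro e he
        rw [Walk.edges_cons, List.mem_cons] at he ⊢
        rcases he with rfl | he
        · exact Or.inl rfl
        · exact Or.inr (hRe e he)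
      · intro z hz
        rw [Walk.support_cons, List.mem_cons] at hz ⊢
        rcases hz with rfl | hz
        · exact Or.inl rfl
        · exact Or.inr (hRs z hz)
      · intro z hz hzA
        rw [Walk.support_cons, List.mem_cons] at hz
        rcases hz with rfl | hz
        · exact absurd hzA hu
        · exact hRA z hz hzA

/-- A shortest path from `u` to a set `A` meets `A` only at its endpoint. -/
lemma exists_min_path (hG : G.Connected) (u : V) (A : Set V) (hA : A.Nonempty) :
    ∃ (w : V) (_ : w ∈ A) (R : G.Walk u w), R.IsPath ∧ R.length = distToSet G u A ∧
      ∀ z ∈ R.support, z ∈ A → z = w := by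
  have hne : ((G.dist u) '' A).Nonempty := hA.image _
  have hmem : distToSet G u A ∈ (G.dist u) '' A := Nat.sInf_mem hne
  obtain ⟨w, hwA, hwd⟩ := hmem
  obtain ⟨R, hRp, hRl⟩ := (hG.preconnected u w).exists_path_of_dist
  refine ⟨w, hwA, R, hRp, by rw [hRl, hwd], ?_⟩
  intro z hz hzA
  by_contra hne'
  have h1 : G.dist u z ≤ (R.takeUntil z hz).length := SimpleGraph.dist_le _
  have h2 : distToSet G u A ≤ G.dist u z := Nat.sInf_le ⟨z, hzA, rfl⟩
  have hsplit : (R.takeUntil z hz).length + (R.dropUntil z hz).length = R.length := by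
    rw [← Walk.length_append, Walk.take_spec]
  have hpos : 0 < (R.dropUntil z hz).length := by
    rcases Nat.eq_zero_or_pos (R.dropUntil z hz).length with h0 | h
    · exact absurd (Walk.eq_of_length_eq_zero h0) hne'
    · exact h
  omega

/-- Edge-disjointness from the meeting condition. -/
lemma edges_disjoint {u w v x : V} {R : G.Walk u w} {P : G.Walk v x}
    (hmeet : ∀ z ∈ R.support, z ∈ P.support → z = w) :
    ∀ e ∈ R.edges, e ∉ P.edges := by
  intro e heR heP
  induction e with
  | _ a b =>
    have ha : a = w := hmeet a (R.fst_mem_support_of_mem_edges heR)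
      (P.fst_mem_support_of_mem_edges heP)
    have hb : b = w := hmeet b (R.snd_mem_support_of_mem_edges heR)
      (P.snd_mem_support_of_mem_edges heP)
    subst ha; subst hb
    exact G.loopless.irrefl _ (R.adj_of_mem_edges heR)

/-- In a tree, every walk between `v` and `x` contains all edges of the unique path. -/
lemma path_edges_subset (hT : G.IsTree) {v x : V} {P : G.Walk v x} (hP : P.IsPath)
    (W : G.Walk v x) : ∀ e ∈ P.edges, e ∈ W.edges := by
  have : (⟨P, hP⟩ : G.Path v x) = ⟨W.bypass, W.bypass_isPath⟩ :=
    hT.IsAcyclic.path_unique _ _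
  have hPeq : P = W.bypass := congrArg Subtype.val this
  intro e he
  exact W.edges_bypass_subset (hPeq ▸ he)

/-- Key formula: in a tree, the Steiner distance of `{v, x, u}` is the length of the
`v,x`-path plus the distance from `u` to that path. -/
lemma steiner_formula (hT : G.IsTree) {v x : V} (P : G.Walk v x) (hP : P.IsPath) (u : V) :
    steinerDist G ({v, x, u} : Set V) =
      P.length + distToSet G u {z | z ∈ P.support} := by
  set A : Set V := {z | z ∈ P.support} with hA
  have hAne : A.Nonempty := ⟨v, Walk.start_mem_support _⟩
  obtain ⟨w, hwA, R, hRp, hRl, hRmeet⟩ := exists_min_path hT.isConnected u A hAne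
  -- the candidate subgraph
  have hmem : P.length + distToSet G u A ∈
      {n | ∃ H : G.Subgraph, H.Connected ∧ ({v, x, u} : Set V) ⊆ H.verts ∧
        H.edgeSet.ncard = n} := by
    refine ⟨P.toSubgraph ⊔ R.toSubgraph, ?_, ?_, ?_⟩
    · refine Subgraph.connected_sup P.toSubgraph_connected.preconnected R.toSubgraph_connected.preconnected ?_
      refine ⟨w, ?_⟩
      rw [Subgraph.verts_inf]
      exact ⟨(Walk.mem_verts_toSubgraph _).2 hwA, (Walk.mem_verts_toSubgraph _).2 R.end_mem_support⟩
    · intro z hz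
      rw [Subgraph.verts_sup]
      rcases hz with rfl | rfl | rfl
      · exact Or.inl ((Walk.mem_verts_toSubgraph _).2 P.start_mem_support)
      · exact Or.inl ((Walk.mem_verts_toSubgraph _).2 P.end_mem_support)
      · exact Or.inr ((Walk.mem_verts_toSubgraph _).2 R.start_mem_support)
    · have hd : ∀ e ∈ R.edges, e ∉ P.edges := edges_disjoint hRmeet
      have hset : (P.toSubgraph ⊔ R.toSubgraph).edgeSet =
          ↑(P.edges.toFinset ∪ R.edges.toFinset) := by
        rw [Subgraph.edgeSet_sup, Walk.edgeSet_toSubgraph, Walk.edgeSet_toSubgraph]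
        ext e; simp
      rw [hset, Set.ncard_coe_finset, Finset.card_union_of_disjoint, 
        List.toFinset_card_of_nodup hP.isTrail.edges_nodup,
        List.toFinset_card_of_nodup hRp.isTrail.edges_nodup,
        Walk.length_edges, Walk.length_edges, hRl]
      rw [Finset.disjoint_left]
      intro e he1 he2
      rw [List.mem_toFinset] at he1 he2
      exact hd e he2 he1
  apply le_antisymm
  · exact Nat.sInf_le hmem
  · refine le_csInf ⟨_, hmem⟩ ?_
    rintro n ⟨H, hHc, hHv, rfl⟩
    have hv : v ∈ H.verts := hHv (by simp)
    have hx : x ∈ H.verts := hHv (by simp)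
    have hu : u ∈ H.verts := hHv (by simp)
    obtain ⟨Wvx, hWvx⟩ := exists_walk_of_connected hHc hv hx
    obtain ⟨Wu, hWu⟩ := exists_walk_of_connected hHc hu hv
    have hPe : ∀ e ∈ P.edges, e ∈ H.edgeSet := fun e he =>
      hWvx e (path_edges_subset hT hP Wvx e he)
    obtain ⟨w', hw'A, R', hR'p, hR'e, _, hR'meet⟩ :=
      first_hit (A := A) Wu.bypass Wu.bypass_isPath P.start_mem_support
    have hR'H : ∀ e ∈ R'.edges, e ∈ H.edgeSet := fun e he =>
      hWu e (Wu.edges_bypass_subset (hR'e e he))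
    have hdle : distToSet G u A ≤ R'.length := by
      calc distToSet G u A ≤ G.dist u w' := Nat.sInf_le ⟨w', hw'A, rfl⟩
        _ ≤ R'.length := SimpleGraph.dist_le _
    have hd : ∀ e ∈ R'.edges, e ∉ P.edges := edges_disjoint fun z hz hzP => hR'meet z hz hzP
    have hsub : ↑(P.edges.toFinset ∪ R'.edges.toFinset) ⊆ H.edgeSet := by
      intro e he
      simp only [Finset.coe_union, Set.mem_union, Finset.mem_coe, List.mem_toFinset] at he
      rcases he with he | he
      · exact hPe e he
      · exact hR'H e he
    calc P.length + distToSet G u A ≤ P.length + R'.length := by omega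
      _ = (P.edges.toFinset ∪ R'.edges.toFinset).card := by
          rw [Finset.card_union_of_disjoint, List.toFinset_card_of_nodup hP.isTrail.edges_nodup,
            List.toFinset_card_of_nodup hR'p.isTrail.edges_nodup,
            Walk.length_edges, Walk.length_edges]
          rw [Finset.disjoint_left]
          intro e he1 he2
          rw [List.mem_toFinset] at he1 he2
          exact hd e he2 he1
      _ = (↑(P.edges.toFinset ∪ R'.edges.toFinset) : Set (Sym2 V)).ncard := by
          rw [Set.ncard_coe_finset]
      _ ≤ H.edgeSet.ncard := Set.ncard_le_ncard hsub H.edgeSet.toFinite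

end ThirdTerminal

/-- Lemma 2.7: let `v` be a vertex of a tree `T` and `S = {v, x, y}` a Steiner 3-ecc
`v`-set such that the `v,x`-path `P` is a longest path of `T` starting at `v`. Then
`d_T(y, P) = ecc_T(P)`. -/


theorem third_terminal_property {V : Type} [Fintype V] [DecidableEq V] (G : SimpleGraph V)
    (hT : G.IsTree) (v x y : V)
    (hcard : ({v, x, y} : Finset V).card = 3)
    (hecc : steinerDist G ↑({v, x, y} : Finset V) = steinerEcc G 3 v)
    (P : G.Walk v x) (hP : P.IsPath) (hPlen : P.length = ecc2 G v) :
    distToSet G y {z | z ∈ P.support} = eccOfSet G {z | z ∈ P.support} := by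
  classical
  set A : Set V := {z | z ∈ P.support} with hA
  have key : ∀ a b : V, ({v, x, y} : Finset V) ⊆ {a, b} → False := by
    intro a b hsub
    have h1 := Finset.card_le_card hsub
    have h2 := Finset.card_insert_le a ({b} : Finset V)
    simp only [Finset.card_singleton] at h2
    omega
  have hvx : v ≠ x := by rintro rfl; exact key v y (by intro z hz; simp at hz ⊢; tauto)
  have hvy : v ≠ y := by rintro rfl; exact key v x (by intro z hz; simp at hz ⊢; tauto)
  have hxy : x ≠ y := by rintro rfl; exact key v x (by intro z hz; simp at hz ⊢; tauto)
  have hycoe : (↑({v, x, y} : Finset V) : Set V) = ({v, x, y} : Set V) := by simp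
  have hyform : steinerDist G ↑({v, x, y} : Finset V) = P.length + distToSet G y A := by
    rw [hycoe]; exact ThirdTerminal.steiner_formula hT P hP y
  have hbdd : BddAbove {d | ∃ S : Finset V, v ∈ S ∧ S.card = 3 ∧ steinerDist G ↑S = d} := by
    refine ⟨(⊤ : G.Subgraph).edgeSet.ncard, ?_⟩
    rintro d ⟨S, -, -, rfl⟩
    apply Nat.sInf_le
    refine ⟨⊤, ?_, by simp, rfl⟩
    rw [Subgraph.connected_iff']
    exact hT.isConnected.map Subgraph.topIso.symm.toHom Subgraph.topIso.symm.toEquiv.surjective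
  apply le_antisymm
  · exact Finset.le_sup (f := fun u => distToSet G u A) (Finset.mem_univ y)
  · show Finset.univ.sup (fun u => distToSet G u A) ≤ distToSet G y A
    apply Finset.sup_le
    intro u _
    show distToSet G u A ≤ distToSet G y A
    by_cases hu : u ∈ P.support
    · have h0 : distToSet G u A = 0 :=
        Nat.sInf_eq_zero.mpr (Or.inl ⟨u, hu, SimpleGraph.dist_self⟩)
      omega
    · have huv : u ≠ v := fun h => hu (h ▸ P.start_mem_support)
      have hux : u ≠ x := fun h => hu (h ▸ P.end_mem_support)
      have hc3 : ({v, x, u} : Finset V).card = 3 := by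
        rw [Finset.card_insert_of_notMem (by simp [hvx, huv.symm]),
          Finset.card_insert_of_notMem (by simp [hux.symm]), Finset.card_singleton]
      have h1 : steinerDist G ↑({v, x, u} : Finset V) = P.length + distToSet G u A := by
        rw [show (↑({v, x, u} : Finset V) : Set V) = ({v, x, u} : Set V) by simp]
        exact ThirdTerminal.steiner_formula hT P hP u
      have h2 : steinerDist G ↑({v, x, u} : Finset V) ≤ steinerEcc G 3 v :=
        le_csSup hbdd ⟨{v, x, u}, by simp, hc3, rfl⟩
      rw [← hecc, hyform] at h2
      omega
end

section
/- Let v be a vertex of a tree T, and let P_1 and P_2 be two (possibly distinct) longest paths of T having v as an endpoint (each of length ecc_2(v,T)). Then ecc_T(P_1) = ecc_T(P_2). -/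
open SimpleGraph

open Walk

set_option linter.unusedSectionVars false

section helpers
variable {V : Type} [DecidableEq V] {G : SimpleGraph V}

lemma treePathLen (hT : G.IsTree) {a b : V} (p : G.Walk a b) (hp : p.IsPath) :
    p.length = G.dist a b := by
  obtain ⟨q, hq, hql⟩ := hT.isConnected.exists_path_of_dist a b
  rw [(hT.existsUnique_path a b).unique hp hq, hql]

lemma treeSplit (hT : G.IsTree) {a b w : V} (p : G.Walk a b) (hp : p.IsPath)
    (hw : w ∈ p.support) : G.dist a w + G.dist w b = G.dist a b := by
  rw [← treePathLen hT p hp, ← treePathLen hT _ (hp.takeUntil hw),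
      ← treePathLen hT _ (hp.dropUntil hw), ← length_append, take_spec]

lemma appendPath {u m b : V} {q : G.Walk u m} {r : G.Walk m b} (hq : q.IsPath) (hr : r.IsPath)
    (h : ∀ w, w ∈ q.support → w ∈ r.support → w = m) : (q.append r).IsPath := by
  rw [isPath_def, support_append]
  refine List.Nodup.append hq.support_nodup hr.support_nodup.tail ?_
  intro w hwq hwr
  have hwr' : w ∈ r.support := List.mem_of_mem_tail hwr
  have hwm := h w hwq hwr'
  subst hwm
  have hnd := hr.support_nodup
  rw [r.support_eq_cons] at hnd
  exact (List.nodup_cons.mp hnd).1 hwr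

lemma treeGate (hT : G.IsTree) {a b : V} (u : V) (p : G.Walk a b) (hp : p.IsPath) :
    ∃ m ∈ p.support, (∀ w ∈ p.support, G.dist u m ≤ G.dist u w) ∧
      G.dist u a = G.dist u m + G.dist m a ∧ G.dist u b = G.dist u m + G.dist m b := by
  classical
  obtain ⟨m, hm, hmin⟩ := Finset.exists_min_image p.support.toFinset (fun w => G.dist u w)
    ⟨a, by simp [p.start_mem_support]⟩
  rw [List.mem_toFinset] at hm
  have hmin' : ∀ w ∈ p.support, G.dist u m ≤ G.dist u w := fun w hw =>
    hmin w (List.mem_toFinset.mpr hw)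
  obtain ⟨q, hq, hql⟩ := hT.isConnected.exists_path_of_dist u m
  have key : ∀ w, w ∈ q.support → w ∈ p.support → w = m := by
    intro w hwq hwp
    have h1 : G.dist u w + G.dist w m = G.dist u m := treeSplit hT q hq hwq
    have h2 : G.dist u m ≤ G.dist u w := hmin' w hwp
    have h3 : G.dist w m = 0 := by omega
    exact (hT.isConnected.dist_eq_zero_iff).mp h3
  have hdropP : (q.append (p.dropUntil m hm)).IsPath :=
    appendPath hq (hp.dropUntil hm) (fun w hwq hwr =>
      key w hwq (p.support_dropUntil_subset hm hwr))
  have htakeP : (q.append (p.takeUntil m hm).reverse).IsPath := by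
    refine appendPath hq (hp.takeUntil hm).reverse ?_
    intro w hwq hwr
    rw [support_reverse, List.mem_reverse] at hwr
    exact key w hwq (p.support_takeUntil_subset hm hwr)
  have e1 : G.dist u b = G.dist u m + G.dist m b := by
    have := treePathLen hT _ hdropP
    rw [length_append, hql, treePathLen hT _ (hp.dropUntil hm)] at this
    omega
  have e2 : G.dist u a = G.dist u m + G.dist m a := by
    have := treePathLen hT _ htakeP
    rw [length_append, hql, length_reverse, treePathLen hT _ (hp.takeUntil hm)] at this
    have hc : G.dist a m = G.dist m a := dist_comm
    omega
  exact ⟨m, hm, hmin', e2, e1⟩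

lemma treeCollinear (hT : G.IsTree) {a b : V} (p : G.Walk a b) (hp : p.IsPath)
    {w₁ w₂ : V} (h1 : w₁ ∈ p.support) (h2 : w₂ ∈ p.support) :
    G.dist a w₁ + G.dist w₁ w₂ = G.dist a w₂ ∨ G.dist a w₂ + G.dist w₂ w₁ = G.dist a w₁ := by
  have h2' : w₂ ∈ (p.takeUntil w₁ h1).support ∨ w₂ ∈ (p.dropUntil w₁ h1).support := by
    rw [← mem_support_append_iff, take_spec]; exact h2
  rcases h2' with hc | hc
  · exact Or.inr (treeSplit hT _ (hp.takeUntil h1) hc)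
  · left
    have s1 : G.dist w₁ w₂ + G.dist w₂ b = G.dist w₁ b := treeSplit hT _ (hp.dropUntil h1) hc
    have s2 : G.dist a w₁ + G.dist w₁ b = G.dist a b := treeSplit hT p hp h1
    have s3 : G.dist a w₂ + G.dist w₂ b = G.dist a b := treeSplit hT p hp h2
    omega

lemma distToSet_eq_gate {u m : V} {A : Set V} (hm : m ∈ A)
    (hmin : ∀ w ∈ A, G.dist u m ≤ G.dist u w) :
    distToSet G u A = G.dist u m := by
  have h1 : G.dist u m ∈ (G.dist u) '' A := Set.mem_image_of_mem _ hm
  refine le_antisymm (Nat.sInf_le h1) ?_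
  obtain ⟨w, hw, hweq⟩ := Nat.sInf_mem (⟨_, h1⟩ : ((G.dist u) '' A).Nonempty)
  have hdef : distToSet G u A = sInf ((G.dist u) '' A) := rfl
  rw [hdef, ← hweq]
  exact hmin w hw

end helpers

variable {V : Type} [Fintype V] [DecidableEq V] {G : SimpleGraph V}

lemma eccOfSet_le_aux (hT : G.IsTree) (v b₁ b₂ : V)
    (P₁ : G.Walk v b₁) (hP₁ : P₁.IsPath) (hP₁len : P₁.length = ecc2 G v)
    (P₂ : G.Walk v b₂) (hP₂ : P₂.IsPath) (hP₂len : P₂.length = ecc2 G v) :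
    eccOfSet G {z | z ∈ P₁.support} ≤ eccOfSet G {z | z ∈ P₂.support} := by
  apply Finset.sup_le
  intro u _
  obtain ⟨m, hm, hmmin, hma, hmb⟩ := treeGate hT u P₁ hP₁
  obtain ⟨g, hg, hgmin, hga, hgb⟩ := treeGate hT u P₂ hP₂
  obtain ⟨h, hh, hhmin, hha, hhb⟩ := treeGate hT b₁ P₂ hP₂
  have dv1 : G.dist v b₁ = ecc2 G v := by rw [← treePathLen hT P₁ hP₁, hP₁len]
  have dv2 : G.dist v b₂ = ecc2 G v := by rw [← treePathLen hT P₂ hP₂, hP₂len]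
  have e3 : G.dist v m + G.dist m b₁ = ecc2 G v := by
    rw [← dv1]; exact treeSplit hT P₁ hP₁ hm
  have e6 : G.dist v g + G.dist g b₂ = ecc2 G v := by
    rw [← dv2]; exact treeSplit hT P₂ hP₂ hg
  have e9 : G.dist v h + G.dist h b₂ = ecc2 G v := by
    rw [← dv2]; exact treeSplit hT P₂ hP₂ hh
  have hu : G.dist v u ≤ ecc2 G v := Finset.le_sup (Finset.mem_univ u)
  have c1 : G.dist m v = G.dist v m := dist_comm
  have c2 : G.dist g v = G.dist v g := dist_comm
  have c3 : G.dist h v = G.dist v h := dist_comm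
  have c4 : G.dist b₁ v = G.dist v b₁ := dist_comm
  have c5 : G.dist h b₁ = G.dist b₁ h := dist_comm
  have c6 : G.dist u v = G.dist v u := dist_comm
  have c7 : G.dist g h = G.dist h g := dist_comm
  have t1 : G.dist u b₁ ≤ G.dist u g + (G.dist g h + G.dist h b₁) :=
    le_trans (hT.isConnected.dist_triangle (v := g))
      (by exact Nat.add_le_add_left (hT.isConnected.dist_triangle (v := h)) _)
  have hd1 : distToSet G u {z | z ∈ P₁.support} = G.dist u m :=
    distToSet_eq_gate (A := {z | z ∈ P₁.support}) hm (fun w hw => hmmin w hw)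
  have hd2 : distToSet G u {z | z ∈ P₂.support} = G.dist u g :=
    distToSet_eq_gate (A := {z | z ∈ P₂.support}) hg (fun w hw => hgmin w hw)
  have hd3 : distToSet G b₁ {z | z ∈ P₂.support} = G.dist b₁ h :=
    distToSet_eq_gate (A := {z | z ∈ P₂.support}) hh (fun w hw => hhmin w hw)
  have hle2 : distToSet G u {z | z ∈ P₂.support} ≤ eccOfSet G {z | z ∈ P₂.support} :=
    Finset.le_sup (f := fun x => distToSet G x {z | z ∈ P₂.support}) (Finset.mem_univ u)
  have hle3 : distToSet G b₁ {z | z ∈ P₂.support} ≤ eccOfSet G {z | z ∈ P₂.support} :=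
    Finset.le_sup (f := fun x => distToSet G x {z | z ∈ P₂.support}) (Finset.mem_univ b₁)
  rcases treeCollinear hT P₂ hP₂ hg hh with hc | hc
  · -- g between v and h: dist u m ≤ dist u g
    have goal : G.dist u m ≤ G.dist u g := by omega
    calc distToSet G u {z | z ∈ P₁.support} = G.dist u m := hd1
      _ ≤ G.dist u g := goal
      _ = distToSet G u {z | z ∈ P₂.support} := hd2.symm
      _ ≤ eccOfSet G {z | z ∈ P₂.support} := hle2
  · -- h between v and g: dist u m ≤ dist b₁ h
    have goal : G.dist u m ≤ G.dist b₁ h := by omega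
    calc distToSet G u {z | z ∈ P₁.support} = G.dist u m := hd1
      _ ≤ G.dist b₁ h := goal
      _ = distToSet G b₁ {z | z ∈ P₂.support} := hd3.symm
      _ ≤ eccOfSet G {z | z ∈ P₂.support} := hle3


/-- Lemma 2.8: let `v` be a vertex of a tree `T`, and let `P₁` and `P₂` be longest paths of
`T` having `v` as an endpoint. Then `ecc_T(P₁) = ecc_T(P₂)`. -/
theorem ecc_eq_for_longest_paths {V : Type} [Fintype V] (G : SimpleGraph V)
    (hT : G.IsTree) (v b₁ b₂ : V)
    (P₁ : G.Walk v b₁) (hP₁ : P₁.IsPath) (hP₁len : P₁.length = ecc2 G v)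
    (P₂ : G.Walk v b₂) (hP₂ : P₂.IsPath) (hP₂len : P₂.length = ecc2 G v) :
    eccOfSet G {z | z ∈ P₁.support} = eccOfSet G {z | z ∈ P₂.support} := by
  classical
  exact le_antisymm
    (eccOfSet_le_aux hT v b₁ b₂ P₁ hP₁ hP₁len P₂ hP₂ hP₂len)
    (eccOfSet_le_aux hT v b₂ b₁ P₂ hP₂ hP₂len P₁ hP₁ hP₁len)
end
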